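/- arXiv:1409.4142 — 3 statements merged into one kernel-verified Lean document; each statement's English description precedes it below -/
import Mathlib

section
/- For any graph Γ, the spherical growth series of the graph monoid M(Γ) satisfies M(Γ)(t) = C(Γ)(t/(1-t)), where C(Γ) is the spherical growth series of the right-angled Coxeter group W(Γ). Equivalently, for all n ≥ 1, the number m_n of elements of length n in M(Γ) equals Σ_{k=1}^{n} c_k · binomial(n-1,k-1), where c_k is the number of elements of length k in W(Γ). -/
open scoped Classical

variable {V : Type*} {M : Type*} {G : Type*}

noncomputable def mlen [Monoid M] (f : V → M) (x : M) : ℕ :=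
  sInf {n | ∃ w : List V, (w.map f).prod = x ∧ w.length = n}

def mtype [Monoid M] (f : V → M) (x : M) : Set V :=
  {i | ∃ w : List V, (w.map f).prod = x ∧ w.length = mlen f x ∧ w.getLast? = some i}

def geval [Group G] (f : V → G) : V × Bool → G := fun l => if l.2 then f l.1 else (f l.1)⁻¹

noncomputable def glen [Group G] (f : V → G) (x : G) : ℕ :=
  sInf {n | ∃ w : List (V × Bool), (w.map (geval f)).prod = x ∧ w.length = n}

def gtype [Group G] (f : V → G) (x : G) : Set V :=
  {i | ∃ w : List (V × Bool), (w.map (geval f)).prod = x ∧ w.length = glen f x ∧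
    w.getLast?.map Prod.fst = some i}

def graphMonoidRel (Γ : SimpleGraph V) : FreeMonoid V → FreeMonoid V → Prop :=
  fun a b => ∃ i j, Γ.Adj i j ∧ a = FreeMonoid.of i * FreeMonoid.of j ∧
    b = FreeMonoid.of j * FreeMonoid.of i

abbrev GraphMonoid (Γ : SimpleGraph V) := (conGen (graphMonoidRel Γ)).Quotient

def GraphMonoid.gen (Γ : SimpleGraph V) (i : V) : GraphMonoid Γ :=
  (conGen (graphMonoidRel Γ)).mk' (FreeMonoid.of i)

def raagRels (Γ : SimpleGraph V) : Set (FreeGroup V) :=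
  {r | ∃ i j, Γ.Adj i j ∧
    r = FreeGroup.of i * FreeGroup.of j * (FreeGroup.of i)⁻¹ * (FreeGroup.of j)⁻¹}

abbrev RAAG (Γ : SimpleGraph V) := PresentedGroup (raagRels Γ)

def RAAG.gen (Γ : SimpleGraph V) (i : V) : RAAG Γ := PresentedGroup.of i

def racgRels (Γ : SimpleGraph V) : Set (FreeGroup V) :=
  raagRels Γ ∪ {r | ∃ i, r = FreeGroup.of i * FreeGroup.of i}

abbrev RACG (Γ : SimpleGraph V) := PresentedGroup (racgRels Γ)

def RACG.gen (Γ : SimpleGraph V) (i : V) : RACG Γ := PresentedGroup.of i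

noncomputable def cliquePoly [Fintype V] (Γ : SimpleGraph V) : Polynomial ℚ :=
  ∑ k ∈ Finset.range (Fintype.card V + 1), ((Γ.cliqueFinset k).card : ℚ) • Polynomial.X ^ k

def Branch [LinearOrder V] (Γ : SimpleGraph V) (C' C : Set V) : Prop :=
  ∃ i, i ∉ C' ∧ C = insert i {j ∈ C' | Γ.Adj i j} ∧ ∀ j ∈ C, j ≠ i → j < i

def WeakBranch (Γ : SimpleGraph V) (C' C : Set V) : Prop :=
  ∃ i, i ∉ C' ∧ C = insert i {j ∈ C' | Γ.Adj i j}

noncomputable def WeakBranchF (Γ : SimpleGraph V) (C' C : Finset V) : Prop :=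
  ∃ i, i ∉ C' ∧ C = insert i (C'.filter (Γ.Adj i))

noncomputable def linkF [Fintype V] (Γ : SimpleGraph V) (C : Finset V) : Finset V :=
  Finset.univ.filter fun x => x ∉ C ∧ ∀ c ∈ C, Γ.Adj x c

def LinkRegular [Fintype V] (Γ : SimpleGraph V) : Prop :=
  ∀ C₁ C₂ : Finset V, Γ.IsClique (C₁ : Set V) → Γ.IsClique (C₂ : Set V) →
    C₁.card = C₂.card → (linkF Γ C₁).card = (linkF Γ C₂).card

set_option linter.unusedSectionVars false
set_option maxHeartbeats 1000000
namespace MG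

variable {α : Type*} [DecidableEq α]

/-- One elementary swap of two `r`-related adjacent letters. -/
def Step (r : α → α → Prop) (u v : List α) : Prop :=
  ∃ p q a b, r a b ∧ u = p ++ a :: b :: q ∧ v = p ++ b :: a :: q

/-- Swap-equivalence of words. -/
def Eqv (r : α → α → Prop) : List α → List α → Prop := Relation.EqvGen (Step r)

variable {r : α → α → Prop} {u v w : List α} {a b : α}

theorem Eqv.refl (u : List α) : Eqv r u u := Relation.EqvGen.refl u
theorem Eqv.symm (h : Eqv r u v) : Eqv r v u := Relation.EqvGen.symm _ _ h
theorem Eqv.trans (h : Eqv r u v) (h' : Eqv r v w) : Eqv r u w := Relation.EqvGen.trans _ _ _ h h'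
theorem Step.eqv (h : Step r u v) : Eqv r u v := Relation.EqvGen.rel _ _ h

theorem Step.append_left (w : List α) (h : Step r u v) : Step r (w ++ u) (w ++ v) := by
  obtain ⟨p, q, a, b, hr, hu, hv⟩ := h
  exact ⟨w ++ p, q, a, b, hr, by simp [hu], by simp [hv]⟩

theorem Step.append_right (w : List α) (h : Step r u v) : Step r (u ++ w) (v ++ w) := by
  obtain ⟨p, q, a, b, hr, hu, hv⟩ := h
  exact ⟨p, q ++ w, a, b, hr, by simp [hu], by simp [hv]⟩

theorem Eqv.append_left (w : List α) (h : Eqv r u v) : Eqv r (w ++ u) (w ++ v) := by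
  induction h with
  | rel x y h => exact (h.append_left w).eqv
  | refl x => exact Eqv.refl _
  | symm x y _ ih => exact ih.symm
  | trans x y z _ _ ih1 ih2 => exact ih1.trans ih2

theorem Eqv.append_right (w : List α) (h : Eqv r u v) : Eqv r (u ++ w) (v ++ w) := by
  induction h with
  | rel x y h => exact (h.append_right w).eqv
  | refl x => exact Eqv.refl _
  | symm x y _ ih => exact ih.symm
  | trans x y z _ _ ih1 ih2 => exact ih1.trans ih2

theorem Eqv.append (h : Eqv r u v) (h' : Eqv r u' v') : Eqv r (u ++ u') (v ++ v') :=
  (h.append_right u').trans (h'.append_left v)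

theorem Eqv.cons (a : α) (h : Eqv r u v) : Eqv r (a :: u) (a :: v) := h.append_left [a]

theorem Step.length (h : Step r u v) : u.length = v.length := by
  obtain ⟨p, q, a, b, hr, hu, hv⟩ := h; simp [hu, hv]

theorem Eqv.length (h : Eqv r u v) : u.length = v.length := by
  induction h with
  | rel x y h => exact h.length
  | refl x => rfl
  | symm x y _ ih => exact ih.symm
  | trans x y z _ _ ih1 ih2 => exact ih1.trans ih2

theorem Step.filter (p : α → Bool) (hp : ∀ a b, r a b → ¬(p a = true ∧ p b = true))
    (h : Step r u v) : u.filter p = v.filter p := by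
  obtain ⟨s, t, a, b, hr, hu, hv⟩ := h
  subst hu hv
  simp only [List.filter_append, List.filter_cons]
  cases ha : p a <;> cases hb : p b <;> simp [ha, hb]
  exact absurd ⟨ha, hb⟩ (hp a b hr)

theorem Eqv.filter (p : α → Bool) (hp : ∀ a b, r a b → ¬(p a = true ∧ p b = true))
    (h : Eqv r u v) : u.filter p = v.filter p := by
  induction h with
  | rel x y h => exact h.filter p hp
  | refl x => rfl
  | symm x y _ ih => exact ih.symm
  | trans x y z _ _ ih1 ih2 => exact ih1.trans ih2

/-- Projection to the letters `a`, `b`. -/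
def Proj (a b : α) (w : List α) : List α := w.filter (fun x => x = a || x = b)

theorem Eqv.proj (hs : Symmetric r) (hne : ∀ a b, r a b → a ≠ b)
    (hab : a = b ∨ ¬ r a b) (h : Eqv r u v) : Proj a b u = Proj a b v := by
  refine h.filter _ (fun c d hr hcd => ?_)
  obtain ⟨hc, hd⟩ := hcd
  simp only [Bool.or_eq_true, decide_eq_true_eq] at hc hd
  have hcd' : c ≠ d := hne c d hr
  rcases hab with h1 | h1
  · subst h1; rcases hc with rfl | rfl <;> rcases hd with rfl | rfl <;> simp_all
  · rcases hc with rfl | rfl <;> rcases hd with rfl | rfl <;>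
      first | exact hcd' rfl | exact h1 hr | exact h1 (hs hr)

theorem exists_first (h : a ∈ v) : ∃ p q, v = p ++ a :: q ∧ a ∉ p := by
  induction v with
  | nil => simp at h
  | cons c t ih =>
    by_cases hc : c = a
    · exact ⟨[], t, by simp [hc], by simp⟩
    · have ht : a ∈ t := by
        rcases List.mem_cons.mp h with h' | h'
        · exact absurd h'.symm hc
        · exact h'
      obtain ⟨p, q, hpq, hnp⟩ := ih ht
      refine ⟨c :: p, q, by simp [hpq], ?_⟩
      simp only [List.mem_cons, not_or]
      exact ⟨fun h' => hc h'.symm, hnp⟩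

theorem eqv_move_front (h : ∀ b ∈ w, r b a) : Eqv r (w ++ a :: q) (a :: (w ++ q)) := by
  induction w with
  | nil => exact Eqv.refl _
  | cons c t ih =>
    have h1 : Eqv r (c :: (t ++ a :: q)) (c :: (a :: (t ++ q))) :=
      (ih (fun b hb => h b (List.mem_cons_of_mem _ hb))).cons c
    have h2 : Step r (c :: a :: (t ++ q)) (a :: c :: (t ++ q)) :=
      ⟨[], t ++ q, c, a, h (c) (by simp), rfl, rfl⟩
    exact h1.trans h2.eqv


theorem proj_cons_strip {x y : α} (h : Proj x y (a :: u) = Proj x y (a :: v)) :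
    Proj x y u = Proj x y v := by
  simp only [Proj, List.filter_cons] at h
  cases hc : (decide (a = x) || decide (a = y)) <;> rw [hc] at h
  · exact h
  · exact List.cons_injective h

theorem proj_cons (hc : (decide (a = x) || decide (a = y)) = true) :
    Proj x y (a :: u) = a :: Proj x y u := by
  simp [Proj, List.filter_cons, hc]

theorem exists_front (hs : Symmetric r) (hne : ∀ a b, r a b → a ≠ b)
    (hproj : ∀ b', a = b' ∨ ¬ r a b' → Proj a b' (a :: u) = Proj a b' v) :
    ∃ p q, v = p ++ a :: q ∧ a ∉ p ∧ (∀ b ∈ p, r b a) ∧ Eqv r v (a :: (p ++ q)) := by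
  have hmem : a ∈ v := by
    have h := hproj a (Or.inl rfl)
    rw [proj_cons (by simp)] at h
    have : a ∈ Proj a a v := h ▸ List.mem_cons_self (a := a)
    exact List.mem_of_mem_filter this
  obtain ⟨p, q, rfl, hnp⟩ := exists_first hmem
  have hadj : ∀ b ∈ p, r b a := by
    intro b hb
    by_contra hnr
    have hba : b ≠ a := fun h => hnp (h ▸ hb)
    have hab : ¬ r a b := fun h => hnr (hs h)
    have hP := hproj b (Or.inr hab)
    rw [proj_cons (by simp)] at hP
    rw [show Proj a b (p ++ a :: q) = Proj a b p ++ a :: Proj a b q by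
      simp only [Proj, List.filter_append, List.filter_cons]; simp] at hP
    have hbp : b ∈ Proj a b p := List.mem_filter.mpr ⟨hb, by simp⟩
    cases hF : Proj a b p with
    | nil => rw [hF] at hbp; simp at hbp
    | cons f fs =>
      rw [hF] at hP
      have hfa : f = a := by
        have := congrArg List.head? hP
        simp at this; exact this.symm
      have : f ∈ p := List.mem_of_mem_filter (hF ▸ List.mem_cons_self (a := f) (l := fs))
      exact hnp (hfa ▸ this)
  exact ⟨p, q, rfl, hnp, hadj, eqv_move_front hadj⟩

theorem eqv_of_proj (hs : Symmetric r) (hne : ∀ a b, r a b → a ≠ b) :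
    ∀ u v : List α, (∀ x y : α, x = y ∨ ¬ r x y → Proj x y u = Proj x y v) → Eqv r u v := by
  intro u
  induction u with
  | nil =>
    intro v hproj
    cases v with
    | nil => exact Eqv.refl _
    | cons c t =>
      have h := hproj c c (Or.inl rfl)
      rw [proj_cons (by simp)] at h
      simp [Proj] at h
  | cons a u' ih =>
    intro v hproj
    obtain ⟨p, q, rfl, hnp, hadj, heqv⟩ :=
      exists_front hs hne (fun b' hb' => hproj a b' hb')
    have hstrip : ∀ x y : α, x = y ∨ ¬ r x y → Proj x y u' = Proj x y (p ++ q) := by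
      intro x y hxy
      have h1 : Proj x y (a :: u') = Proj x y (a :: (p ++ q)) :=
        (hproj x y hxy).trans (heqv.proj hs hne hxy)
      exact proj_cons_strip h1
    exact ((ih (p ++ q) hstrip).cons a).trans heqv.symm

theorem eqv_cancel_head (hs : Symmetric r) (hne : ∀ a b, r a b → a ≠ b)
    (h : Eqv r (a :: u) (a :: v)) : Eqv r u v := by
  refine eqv_of_proj hs hne u v (fun x y hxy => ?_)
  exact proj_cons_strip (h.proj hs hne hxy)

theorem eqv_extract (hs : Symmetric r) (hne : ∀ a b, r a b → a ≠ b)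
    (h : Eqv r (a :: u) v) :
    ∃ p q, v = p ++ a :: q ∧ a ∉ p ∧ (∀ b ∈ p, r b a) ∧ Eqv r u (p ++ q) := by
  obtain ⟨p, q, rfl, hnp, hadj, heqv⟩ :=
    exists_front hs hne (fun b' hb' => h.proj hs hne hb')
  exact ⟨p, q, rfl, hnp, hadj,
    eqv_cancel_head hs hne (h.trans heqv)⟩


section Monoid

variable {V : Type*} [DecidableEq V] {Γ : SimpleGraph V}

/-- The class of a word in the graph monoid. -/
def mk (Γ : SimpleGraph V) (w : List V) : GraphMonoid Γ :=
  (conGen (graphMonoidRel Γ)).mk' (FreeMonoid.ofList w)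

theorem mk_append (u v : List V) : mk Γ (u ++ v) = mk Γ u * mk Γ v := by
  simp [mk, FreeMonoid.ofList_append]

theorem mk_cons (a : V) (u : List V) : mk Γ (a :: u) = GraphMonoid.gen Γ a * mk Γ u := by
  simp [mk, GraphMonoid.gen, FreeMonoid.ofList_cons]

theorem mk_nil : mk Γ [] = 1 := rfl

theorem mk_singleton (a : V) : mk Γ [a] = GraphMonoid.gen Γ a := rfl

/-- The congruence given by swap-equivalence. -/
def eqvCon (Γ : SimpleGraph V) : Con (FreeMonoid V) where
  r := fun x y => Eqv Γ.Adj x.toList y.toList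
  iseqv := ⟨fun x => Eqv.refl _, Eqv.symm, Eqv.trans⟩
  mul' := fun h h' => h.append h'

theorem conGen_iff_eqv {u v : List V} :
    conGen (graphMonoidRel Γ) (FreeMonoid.ofList u) (FreeMonoid.ofList v) ↔ Eqv Γ.Adj u v := by
  constructor
  · intro h
    have hle : conGen (graphMonoidRel Γ) ≤ eqvCon Γ := by
      apply Con.conGen_le.mpr
      rintro x y ⟨i, j, hij, rfl, rfl⟩
      exact Step.eqv ⟨[], [], i, j, hij, rfl, rfl⟩
    exact hle h
  · intro h
    induction h with
    | rel x y h =>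
      obtain ⟨p, q, a, b, hr, rfl, rfl⟩ := h
      have h1 : conGen (graphMonoidRel Γ) (FreeMonoid.ofList [a, b]) (FreeMonoid.ofList [b, a]) :=
        ConGen.Rel.of _ _ ⟨a, b, hr, rfl, rfl⟩
      have := (conGen (graphMonoidRel Γ)).mul
        ((conGen (graphMonoidRel Γ)).mul
          ((conGen (graphMonoidRel Γ)).refl (FreeMonoid.ofList p)) h1)
        ((conGen (graphMonoidRel Γ)).refl (FreeMonoid.ofList q))
      simpa [FreeMonoid.ofList_append, FreeMonoid.ofList_cons, mul_assoc] using this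
    | refl x => exact (conGen _).refl _
    | symm x y _ ih => exact (conGen _).symm ih
    | trans x y z _ _ ih1 ih2 => exact (conGen _).trans ih1 ih2

theorem mk_eq_mk_iff {u v : List V} : mk Γ u = mk Γ v ↔ Eqv Γ.Adj u v := by
  rw [mk, mk]
  rw [show ((conGen (graphMonoidRel Γ)).mk' (FreeMonoid.ofList u) =
      (conGen (graphMonoidRel Γ)).mk' (FreeMonoid.ofList v)) ↔ _ from Con.eq _]
  exact conGen_iff_eqv

theorem mk_surjective (x : GraphMonoid Γ) : ∃ w : List V, mk Γ w = x := by
  obtain ⟨y, hy⟩ := Con.mk'_surjective (c := conGen (graphMonoidRel Γ)) x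
  exact ⟨y.toList, by simpa [mk] using hy⟩

theorem prod_map_gen (w : List V) : (w.map (GraphMonoid.gen Γ)).prod = mk Γ w := by
  induction w with
  | nil => simp [mk_nil]
  | cons a t ih => simp [mk_cons, ih]

theorem mlen_mk (w : List V) : mlen (GraphMonoid.gen Γ) (mk Γ w) = w.length := by
  have hset : {n | ∃ v : List V, (v.map (GraphMonoid.gen Γ)).prod = mk Γ w ∧ v.length = n}
      = {w.length} := by
    ext n
    simp only [Set.mem_setOf_eq, Set.mem_singleton_iff]
    constructor
    · rintro ⟨v, hv, rfl⟩
      rw [prod_map_gen] at hv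
      exact (mk_eq_mk_iff.mp hv).length
    · rintro rfl
      exact ⟨w, prod_map_gen w, rfl⟩
  rw [mlen, hset, csInf_singleton]

end Monoid

section Action

variable {V : Type*} [DecidableEq V] {Γ : SimpleGraph V} {i j : V} {x y z : GraphMonoid Γ}

theorem adj_symm : Symmetric Γ.Adj := fun _ _ h => h.symm
theorem adj_ne : ∀ a b : V, Γ.Adj a b → a ≠ b := fun _ _ h => h.ne

/-- A word with two adjacent equal letters. -/
def Dup (w : List V) : Prop := ∃ (p : List V) (a : V) (q : List V), w = p ++ a :: a :: q

/-- Square-free elements of the graph monoid. -/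
def SF (Γ : SimpleGraph V) (x : GraphMonoid Γ) : Prop := ∀ w, mk Γ w = x → ¬ Dup w

/-- `i` is a possible first letter of `x`. -/
def LTm (Γ : SimpleGraph V) (x : GraphMonoid Γ) (i : V) : Prop := ∃ u, mk Γ (i :: u) = x

theorem extract_of_mk_eq {u w : List V} (h : mk Γ (i :: u) = mk Γ w) :
    ∃ p q, w = p ++ i :: q ∧ i ∉ p ∧ (∀ b ∈ p, Γ.Adj b i) ∧ Eqv Γ.Adj u (p ++ q) :=
  eqv_extract adj_symm adj_ne (mk_eq_mk_iff.mp h)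

theorem gen_mul_cancel (h : GraphMonoid.gen Γ i * y = GraphMonoid.gen Γ i * z) : y = z := by
  obtain ⟨u, rfl⟩ := mk_surjective y
  obtain ⟨v, rfl⟩ := mk_surjective z
  rw [← mk_cons, ← mk_cons] at h
  exact mk_eq_mk_iff.mpr (eqv_cancel_head adj_symm adj_ne (mk_eq_mk_iff.mp h))

/-- Remove a first letter `i` from `x` (junk value if `i` is not a first letter). -/
noncomputable def remM (x : GraphMonoid Γ) (i : V) : GraphMonoid Γ :=
  if h : LTm Γ x i then mk Γ h.choose else x

theorem remM_spec (h : LTm Γ x i) : GraphMonoid.gen Γ i * remM x i = x := by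
  rw [remM, dif_pos h, ← mk_cons]
  exact h.choose_spec

theorem remM_eq (hy : GraphMonoid.gen Γ i * y = x) : remM x i = y := by
  have hlt : LTm Γ x i := by
    obtain ⟨u, rfl⟩ := mk_surjective y
    exact ⟨u, by rw [← hy, mk_cons]⟩
  exact gen_mul_cancel ((remM_spec hlt).trans hy.symm)

theorem SF_one : SF Γ (1 : GraphMonoid Γ) := by
  intro w hw hdup
  have h0 : mk Γ w = mk Γ [] := hw
  have := (mk_eq_mk_iff.mp h0).length
  obtain ⟨p, a, q, rfl⟩ := hdup
  simp at this

theorem SF.tail {u : List V} (h : SF Γ (mk Γ (i :: u))) : SF Γ (mk Γ u) := by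
  intro w hw hdup
  obtain ⟨p, a, q, rfl⟩ := hdup
  refine h (i :: (p ++ a :: a :: q)) ?_ ⟨i :: p, a, q, rfl⟩
  rw [mk_cons, mk_cons, hw]

theorem LTm_gen_mul : LTm Γ (GraphMonoid.gen Γ i * x) i := by
  obtain ⟨u, rfl⟩ := mk_surjective x
  exact ⟨u, (mk_cons i u).symm⟩

theorem SF.rem (hx : SF Γ x) (h : LTm Γ x i) : SF Γ (remM x i) := by
  obtain ⟨u, hu⟩ := h
  have hr : remM x i = mk Γ u := remM_eq (by rw [← mk_cons]; exact hu)
  rw [hr]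
  exact SF.tail (hu ▸ hx)

theorem notLT_rem (hx : SF Γ x) (h : LTm Γ x i) : ¬ LTm Γ (remM x i) i := by
  rintro ⟨u, hu⟩
  refine hx (i :: i :: u) ?_ ⟨[], i, u, rfl⟩
  rw [mk_cons, hu]
  exact remM_spec h

/-- Key closure property: prepending a non-first letter preserves square-freeness. -/
theorem SF.notLT_mul (hx : SF Γ x) (hi : ¬ LTm Γ x i) : SF Γ (GraphMonoid.gen Γ i * x) := by
  obtain ⟨u, rfl⟩ := mk_surjective x
  rw [← mk_cons]
  intro w hw hdup
  obtain ⟨p, a, q, rfl⟩ := hdup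
  obtain ⟨s, t, hst, hns, hadj, heqv⟩ := extract_of_mk_eq (Γ := Γ) (i := i) hw.symm
  -- hst : p ++ a :: a :: q = s ++ i :: t
  have hxeq : mk Γ (s ++ t) = mk Γ u := (mk_eq_mk_iff.mpr heqv).symm
  have hSF : SF Γ (mk Γ u) := hx
  have hLT : ∀ t' : List V, t = i :: t' → False := by
    intro t' ht
    apply hi
    refine ⟨s ++ t', ?_⟩
    rw [← hxeq, ht]
    refine mk_eq_mk_iff.mpr ?_
    exact (eqv_move_front hadj).symm
  have hdup' : ∀ (p' : List V) (a' : V) (q' : List V), s ++ t = p' ++ a' :: a' :: q' → False :=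
    fun p' a' q' h' => hSF (s ++ t) hxeq ⟨p', a', q', h'⟩
  rcases List.append_eq_append_iff.mp hst.symm with ⟨l, hp, hl⟩ | ⟨l, hs, hl⟩
  · rcases l with _ | ⟨c, l'⟩
    · simp only [List.nil_append] at hl
      injection hl with h1 h2
      subst h1
      exact hLT q h2
    · simp only [List.cons_append] at hl
      injection hl with h1 h2
      subst h1
      exact hdup' (s ++ l') a q (by rw [h2, List.append_assoc])
  · rcases l with _ | ⟨c, l'⟩
    · simp only [List.nil_append] at hl
      injection hl with h1 h2
      subst h1
      exact hLT q h2.symm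
    · rcases l' with _ | ⟨d, l''⟩
      · simp only [List.cons_append, List.nil_append] at hl
        injection hl with h1 h2
        injection h2 with h3 h4
        apply hns
        rw [hs, ← h1, h3]
        simp
      · simp only [List.cons_append] at hl
        injection hl with h1 h2
        injection h2 with h3 h4
        exact hdup' p a (l'' ++ t) (by
          rw [hs, ← h1, ← h3]
          simp)

noncomputable def actV (i : V) (y : GraphMonoid Γ) : GraphMonoid Γ :=
  if LTm Γ y i then remM y i else GraphMonoid.gen Γ i * y

theorem actV_of_LT {y : GraphMonoid Γ} (h : LTm Γ y i) : actV i y = remM y i := if_pos h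
theorem actV_of_not {y : GraphMonoid Γ} (h : ¬ LTm Γ y i) :
    actV i y = GraphMonoid.gen Γ i * y := if_neg h

theorem SF.actV_sf {y : GraphMonoid Γ} (hy : SF Γ y) : SF Γ (actV i y) := by
  rw [actV]; split
  · exact hy.rem ‹_›
  · exact hy.notLT_mul ‹_›

theorem actV_invol {y : GraphMonoid Γ} (hy : SF Γ y) : actV i (actV i y) = y := by
  by_cases h : LTm Γ y i
  · rw [actV_of_LT h, actV_of_not (notLT_rem hy h), remM_spec h]
  · rw [actV_of_not h, actV_of_LT LTm_gen_mul, remM_eq rfl]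

theorem gen_mul_comm (hadj : Γ.Adj i j) (z : GraphMonoid Γ) :
    GraphMonoid.gen Γ i * (GraphMonoid.gen Γ j * z) =
      GraphMonoid.gen Γ j * (GraphMonoid.gen Γ i * z) := by
  obtain ⟨u, rfl⟩ := mk_surjective z
  rw [← mk_cons, ← mk_cons, ← mk_cons, ← mk_cons]
  exact mk_eq_mk_iff.mpr (Step.eqv ⟨[], u, i, j, hadj, rfl, rfl⟩)

theorem LTm_mul_of_adj (hadj : Γ.Adj i j) (h : LTm Γ x j) :
    LTm Γ (GraphMonoid.gen Γ i * x) j := by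
  obtain ⟨u, hu⟩ := h
  refine ⟨i :: u, ?_⟩
  rw [← hu, ← mk_cons]
  exact mk_eq_mk_iff.mpr (Step.eqv ⟨[], u, j, i, adj_symm hadj, rfl, rfl⟩)

theorem LTm_mul_elim (hij : i ≠ j) {u : List V} (h : LTm Γ (mk Γ (i :: u)) j) :
    ∃ p q, u = p ++ j :: q ∧ (∀ b ∈ p, Γ.Adj b j) ∧ Γ.Adj i j := by
  obtain ⟨v, hv⟩ := h
  obtain ⟨p, q, hpq, hnp, hadj, _⟩ := extract_of_mk_eq (i := j) (u := v) (w := i :: u) hv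
  rcases p with _ | ⟨c, p'⟩
  · injection hpq with h1 h2
    exact absurd h1 hij
  · simp only [List.cons_append] at hpq
    injection hpq with h1 h2
    subst h1
    exact ⟨p', q, h2, fun b hb => hadj b (List.mem_cons_of_mem _ hb),
      hadj i List.mem_cons_self⟩

theorem LTm_of_LT_mul (hij : i ≠ j) (h : LTm Γ (GraphMonoid.gen Γ i * x) j) : LTm Γ x j := by
  obtain ⟨u, rfl⟩ := mk_surjective x
  rw [← mk_cons] at h
  obtain ⟨p, q, rfl, hpadj, _⟩ := LTm_mul_elim hij h
  exact ⟨p ++ q, (mk_eq_mk_iff.mpr (eqv_move_front hpadj)).symm⟩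

theorem actV_comm_mixed (hadj : Γ.Adj i j) {y : GraphMonoid Γ}
    (hLi : LTm Γ y i) (hLj : ¬ LTm Γ y j) : actV i (actV j y) = actV j (actV i y) := by
  have hij : i ≠ j := hadj.ne
  rw [actV_of_not hLj]
  have hLij : LTm Γ (GraphMonoid.gen Γ j * y) i := LTm_mul_of_adj (adj_symm hadj) hLi
  rw [actV_of_LT hLij]
  have h1 : remM (GraphMonoid.gen Γ j * y) i = GraphMonoid.gen Γ j * remM y i := by
    apply remM_eq
    rw [gen_mul_comm hadj, remM_spec hLi]
  have hnj : ¬ LTm Γ (remM y i) j := by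
    intro hLt
    exact hLj (by
      have := LTm_mul_of_adj hadj hLt
      rwa [remM_spec hLi] at this)
  rw [h1, actV_of_LT hLi, actV_of_not hnj]

theorem actV_comm_both (hadj : Γ.Adj i j) {y : GraphMonoid Γ}
    (hLi : LTm Γ y i) (hLj : LTm Γ y j) : actV i (actV j y) = actV j (actV i y) := by
  have hij : i ≠ j := hadj.ne
  obtain ⟨u, hu⟩ := hLi
  obtain ⟨p, q, rfl, hpadj, _⟩ := LTm_mul_elim hij (hu ▸ hLj)
  have hLi : LTm Γ y i := ⟨_, hu⟩
  have e1 : remM y i = mk Γ (p ++ j :: q) := remM_eq (by rw [← mk_cons]; exact hu)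
  have e2 : mk Γ (p ++ j :: q) = mk Γ (j :: (p ++ q)) := mk_eq_mk_iff.mpr (eqv_move_front hpadj)
  have e3 : remM y j = mk Γ (i :: (p ++ q)) := by
    apply remM_eq
    rw [← mk_cons, ← hu]
    apply mk_eq_mk_iff.mpr
    refine (Step.eqv ⟨[], p ++ q, j, i, adj_symm hadj, rfl, rfl⟩).trans ?_
    exact ((eqv_move_front hpadj).symm).cons i
  have e4 : remM (mk Γ (i :: (p ++ q))) i = mk Γ (p ++ q) := remM_eq (mk_cons _ _).symm
  have e5 : remM (mk Γ (j :: (p ++ q))) j = mk Γ (p ++ q) := remM_eq (mk_cons _ _).symm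
  rw [actV_of_LT hLj, e3, actV_of_LT ⟨p ++ q, rfl⟩, e4,
      actV_of_LT hLi, e1, e2, actV_of_LT ⟨p ++ q, rfl⟩, e5]

theorem actV_comm (hadj : Γ.Adj i j) {y : GraphMonoid Γ} :
    actV i (actV j y) = actV j (actV i y) := by
  by_cases hLi : LTm Γ y i <;> by_cases hLj : LTm Γ y j
  · exact actV_comm_both hadj hLi hLj
  · exact actV_comm_mixed hadj hLi hLj
  · exact (actV_comm_mixed (adj_symm hadj) hLj hLi).symm
  · have h1 : ¬ LTm Γ (GraphMonoid.gen Γ j * y) i :=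
      fun h => hLi (LTm_of_LT_mul (Ne.symm hadj.ne) h)
    have h2 : ¬ LTm Γ (GraphMonoid.gen Γ i * y) j :=
      fun h => hLj (LTm_of_LT_mul hadj.ne h)
    rw [actV_of_not hLj, actV_of_not h1, actV_of_not hLi, actV_of_not h2,
      gen_mul_comm hadj]

end Action

section RACGSec

variable {V : Type*} [DecidableEq V] {Γ : SimpleGraph V} {i j : V}

theorem racg_rel_one {r : FreeGroup V} (hr : r ∈ racgRels Γ) :
    (PresentedGroup.mk (racgRels Γ) r : RACG Γ) = 1 := by
  have : r ∈ Subgroup.normalClosure (racgRels Γ) := Subgroup.subset_normalClosure hr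
  exact (QuotientGroup.eq_one_iff r).mpr this

theorem racg_gen_sq (i : V) : RACG.gen Γ i * RACG.gen Γ i = 1 := by
  have := racg_rel_one (Γ := Γ) (r := FreeGroup.of i * FreeGroup.of i) (Or.inr ⟨i, rfl⟩)
  simpa [RACG.gen, PresentedGroup.of] using this

theorem racg_gen_inv (i : V) : (RACG.gen Γ i)⁻¹ = RACG.gen Γ i :=
  inv_eq_of_mul_eq_one_right (racg_gen_sq i)

theorem racg_gen_comm (hadj : Γ.Adj i j) :
    RACG.gen Γ i * RACG.gen Γ j = RACG.gen Γ j * RACG.gen Γ i := by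
  have := racg_rel_one (Γ := Γ)
    (r := FreeGroup.of i * FreeGroup.of j * (FreeGroup.of i)⁻¹ * (FreeGroup.of j)⁻¹)
    (Or.inl ⟨i, j, hadj, rfl⟩)
  simp only [map_mul, map_inv] at this
  have h2 : (RACG.gen Γ i * RACG.gen Γ j * (RACG.gen Γ i)⁻¹) * (RACG.gen Γ j)⁻¹ = 1 := this
  rw [mul_inv_eq_one] at h2
  exact mul_inv_eq_iff_eq_mul.mp h2

/-- The word map into the RACG. -/
def phiR (Γ : SimpleGraph V) (w : List V) : RACG Γ := (w.map (RACG.gen Γ)).prod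

theorem phiR_nil : phiR Γ [] = 1 := rfl
theorem phiR_cons (a : V) (w : List V) : phiR Γ (a :: w) = RACG.gen Γ a * phiR Γ w := by
  simp [phiR]
theorem phiR_append (u v : List V) : phiR Γ (u ++ v) = phiR Γ u * phiR Γ v := by
  simp [phiR]

theorem phiR_surjective : Function.Surjective (phiR Γ) := by
  intro g
  induction g using PresentedGroup.induction_on with
  | H z =>
    induction z using FreeGroup.induction_on with
    | C1 => exact ⟨[], by simp [phiR]⟩
    | of x => exact ⟨[x], by simp [phiR]; rfl⟩
    | inv_of x _ =>
      refine ⟨[x], ?_⟩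
      rw [map_inv]
      have hx : (PresentedGroup.mk (racgRels Γ)) (FreeGroup.of x) = RACG.gen Γ x := rfl
      rw [hx, racg_gen_inv]
      simp [phiR]
    | mul x y ihx ihy =>
      obtain ⟨lx, hlx⟩ := ihx
      obtain ⟨ly, hly⟩ := ihy
      exact ⟨lx ++ ly, by rw [phiR_append, hlx, hly, map_mul]⟩

end RACGSec

section ActionHom

variable {V : Type*} [DecidableEq V] {Γ : SimpleGraph V} {i j : V}

abbrev SFT (Γ : SimpleGraph V) := {x : GraphMonoid Γ // SF Γ x}

noncomputable def actS (i : V) (x : SFT Γ) : SFT Γ := ⟨actV i x.1, x.2.actV_sf⟩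

theorem actS_invol (i : V) : Function.Involutive (actS (Γ := Γ) i) := fun x =>
  Subtype.ext (actV_invol x.2)

noncomputable def sigmaP (Γ : SimpleGraph V) (i : V) : Equiv.Perm (SFT Γ) :=
  Function.Involutive.toPerm (actS i) (actS_invol i)

theorem sigmaP_apply (x : SFT Γ) : sigmaP Γ i x = actS i x := rfl

theorem sigmaP_inv (i : V) : (sigmaP Γ i)⁻¹ = sigmaP Γ i := by
  rw [Equiv.Perm.inv_def, sigmaP, Function.Involutive.toPerm_symm]

theorem actS_comm (hadj : Γ.Adj i j) (x : SFT Γ) :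
    actS i (actS j x) = actS j (actS i x) := Subtype.ext (actV_comm hadj)

theorem racg_rels_lift : ∀ r ∈ racgRels Γ, FreeGroup.lift (sigmaP Γ) r = 1 := by
  rintro r (⟨i, j, hadj, rfl⟩ | ⟨i, rfl⟩)
  · simp only [map_mul, map_inv, FreeGroup.lift_apply_of]
    ext x
    simp only [Equiv.Perm.coe_mul, Function.comp_apply, sigmaP_inv, Equiv.Perm.coe_one, id_eq,
      sigmaP_apply]
    conv_lhs => rw [← actS_comm hadj (actS j x)]
    rw [actS_invol i (actS j (actS j x)), actS_invol j x]
  · simp only [map_mul, FreeGroup.lift_apply_of]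
    ext x
    simp only [Equiv.Perm.coe_mul, Function.comp_apply, Equiv.Perm.coe_one, id_eq, sigmaP_apply]
    exact Subtype.ext_iff.mp (actS_invol i x)

noncomputable def theta (Γ : SimpleGraph V) : RACG Γ →* Equiv.Perm (SFT Γ) :=
  PresentedGroup.toGroup racg_rels_lift

theorem theta_of (i : V) : theta Γ (RACG.gen Γ i) = sigmaP Γ i :=
  PresentedGroup.toGroup.of racg_rels_lift

noncomputable def ptS (Γ : SimpleGraph V) : SFT Γ := ⟨1, SF_one⟩

noncomputable def Amap (Γ : SimpleGraph V) : RACG Γ → SFT Γ := fun g => theta Γ g (ptS Γ)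

theorem Amap_one : Amap Γ 1 = ptS Γ := by simp [Amap]

theorem Amap_gen_mul (g : RACG Γ) : Amap Γ (RACG.gen Γ i * g) = actS i (Amap Γ g) := by
  simp only [Amap, map_mul, theta_of]
  rfl

noncomputable def psi (Γ : SimpleGraph V) : GraphMonoid Γ →* RACG Γ :=
  Con.lift _ (FreeMonoid.lift (RACG.gen Γ)) (by
    apply Con.conGen_le.mpr
    rintro x y ⟨i, j, hadj, rfl, rfl⟩
    rw [Con.ker_rel]
    simp only [map_mul, FreeMonoid.lift_eval_of]
    exact racg_gen_comm hadj)

theorem psi_mk (w : List V) : psi Γ (mk Γ w) = phiR Γ w := by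
  rw [psi, mk, Con.lift_mk']
  rw [FreeMonoid.lift_apply]
  simp [phiR]

theorem psi_gen (i : V) : psi Γ (GraphMonoid.gen Γ i) = RACG.gen Γ i := by
  have := psi_mk (Γ := Γ) [i]
  rw [mk_singleton] at this
  rw [this]
  simp [phiR]

theorem psi_Amap (g : RACG Γ) : psi Γ (Amap Γ g).1 = g := by
  obtain ⟨l, rfl⟩ := phiR_surjective g
  induction l with
  | nil =>
    rw [phiR_nil, Amap_one]
    simpa [ptS] using (psi Γ).map_one
  | cons a t ih =>
    rw [phiR_cons, Amap_gen_mul]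
    by_cases h : LTm Γ (Amap Γ (phiR Γ t)).1 a
    · have hval : (actS a (Amap Γ (phiR Γ t))).1 = remM (Amap Γ (phiR Γ t)).1 a := actV_of_LT h
      rw [hval]
      have hspec := remM_spec h
      have := congrArg (psi Γ) hspec
      rw [map_mul, psi_gen, ih] at this
      calc psi Γ (remM (Amap Γ (phiR Γ t)).1 a)
          = (RACG.gen Γ a)⁻¹ * (RACG.gen Γ a * psi Γ (remM (Amap Γ (phiR Γ t)).1 a)) := by
            rw [← mul_assoc, inv_mul_cancel, one_mul]
        _ = RACG.gen Γ a * phiR Γ t := by rw [this, racg_gen_inv]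
    · have hval : (actS a (Amap Γ (phiR Γ t))).1
          = GraphMonoid.gen Γ a * (Amap Γ (phiR Γ t)).1 := actV_of_not h
      rw [hval, map_mul, psi_gen, ih]

theorem Amap_injective : Function.Injective (Amap Γ) := by
  intro g g' h
  rw [← psi_Amap (Γ := Γ) g, ← psi_Amap (Γ := Γ) g', h]

theorem Amap_word_SF : ∀ w : List V, SF Γ (mk Γ w) → (Amap Γ (phiR Γ w)).1 = mk Γ w := by
  intro w
  induction w with
  | nil =>
    intro _
    rw [phiR_nil, Amap_one]
    rfl
  | cons a t ih =>
    intro h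
    have hSFt : SF Γ (mk Γ t) := SF.tail h
    rw [phiR_cons, Amap_gen_mul]
    have hLTn : ¬ LTm Γ (Amap Γ (phiR Γ t)).1 a := by
      rw [ih hSFt]
      rintro ⟨u, hu⟩
      refine h (a :: a :: u) ?_ ⟨[], a, u, rfl⟩
      rw [mk_cons (a := a) (u := a :: u), hu, mk_cons]
    have hval : (actS a (Amap Γ (phiR Γ t))).1
        = GraphMonoid.gen Γ a * (Amap Γ (phiR Γ t)).1 := actV_of_not hLTn
    rw [hval, ih hSFt, mk_cons]

theorem Amap_surjective : Function.Surjective (Amap Γ) := by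
  intro x
  obtain ⟨w, hw⟩ := mk_surjective x.1
  exact ⟨phiR Γ w, Subtype.ext (by rw [Amap_word_SF w (hw ▸ x.2), hw])⟩

theorem mlen_actV_le (y : GraphMonoid Γ) :
    mlen (GraphMonoid.gen Γ) (actV i y) ≤ mlen (GraphMonoid.gen Γ) y + 1 := by
  by_cases h : LTm Γ y i
  · obtain ⟨u, hu⟩ := h
    have h1 : remM y i = mk Γ u := remM_eq (by rw [← mk_cons]; exact hu)
    rw [actV_of_LT ⟨u, hu⟩, h1, ← hu, mlen_mk, mlen_mk]
    simp
    omega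
  · obtain ⟨u, rfl⟩ := mk_surjective y
    rw [actV_of_not h, ← mk_cons, mlen_mk, mlen_mk]
    simp

theorem mlen_Amap_le (l : List V) :
    mlen (GraphMonoid.gen Γ) (Amap Γ (phiR Γ l)).1 ≤ l.length := by
  induction l with
  | nil =>
    rw [phiR_nil, Amap_one]
    have : (ptS Γ).1 = mk Γ [] := rfl
    rw [this, mlen_mk]
  | cons a t ih =>
    rw [phiR_cons, Amap_gen_mul]
    calc mlen (GraphMonoid.gen Γ) (actS a (Amap Γ (phiR Γ t))).1
        ≤ mlen (GraphMonoid.gen Γ) (Amap Γ (phiR Γ t)).1 + 1 := mlen_actV_le _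
      _ ≤ t.length + 1 := by omega
      _ = (a :: t).length := by simp

theorem prod_map_racg_gen (w : List V) : (w.map (RACG.gen Γ)).prod = phiR Γ w := rfl

theorem mlen_racg_eq (g : RACG Γ) :
    mlen (RACG.gen Γ) g = mlen (GraphMonoid.gen Γ) (Amap Γ g).1 := by
  obtain ⟨w, hw⟩ := mk_surjective (Amap Γ g).1
  have hg : phiR Γ w = g := by
    have h1 := psi_Amap (Γ := Γ) g
    rw [← hw, psi_mk] at h1
    exact h1
  have hS : {n | ∃ w' : List V, ((w'.map (RACG.gen Γ)).prod = g) ∧ w'.length = n}.Nonempty :=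
    ⟨w.length, w, by rw [prod_map_racg_gen]; exact hg, rfl⟩
  have hmem := Nat.sInf_mem hS
  obtain ⟨w₀, hw₀, hlen₀⟩ := hmem
  have h1 : mlen (GraphMonoid.gen Γ) (Amap Γ g).1 ≤ mlen (RACG.gen Γ) g := by
    rw [prod_map_racg_gen] at hw₀
    have h3 := mlen_Amap_le (Γ := Γ) w₀
    rw [hw₀] at h3
    have h4 : w₀.length = mlen (RACG.gen Γ) g := hlen₀
    omega
  have h2 : mlen (RACG.gen Γ) g ≤ mlen (GraphMonoid.gen Γ) (Amap Γ g).1 := by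
    have hle : mlen (RACG.gen Γ) g ≤ w.length :=
      Nat.sInf_le ⟨w, by rw [prod_map_racg_gen]; exact hg, rfl⟩
    rw [← hw, mlen_mk]
    exact hle
  omega

end ActionHom

section GenericExtra

variable {α : Type*} [DecidableEq α] {r : α → α → Prop} {u v : List α} {a : α}

theorem Step.symm' (hs : Symmetric r) (h : Step r u v) : Step r v u := by
  obtain ⟨p, q, a, b, hr, hu, hv⟩ := h
  exact ⟨p, q, b, a, hs hr, hv, hu⟩

theorem eqv_iff_rtg (hs : Symmetric r) :
    Eqv r u v ↔ Relation.ReflTransGen (Step r) u v := by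
  constructor
  · intro h
    induction h with
    | rel x y h => exact Relation.ReflTransGen.single h
    | refl x => exact Relation.ReflTransGen.refl
    | symm x y _ ih => haveI : Std.Symm (Step r) := ⟨fun _ _ h => h.symm' hs⟩; exact Std.Symm.symm (r := Relation.ReflTransGen (Step r)) _ _ ih
    | trans x y z _ _ ih1 ih2 => exact ih1.trans ih2
  · intro h
    induction h with
    | refl => exact Eqv.refl _
    | tail _ h2 ih => exact ih.trans h2.eqv

theorem eqv_swap_blocks (hs : Symmetric r) {w : List α}
    (h : ∀ a ∈ u, ∀ b ∈ w, r a b) : Eqv r (u ++ w) (w ++ u) := by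
  induction u with
  | nil => simp [Eqv.refl]
  | cons c t ih =>
    have h1 : Eqv r (c :: (t ++ w)) (c :: (w ++ t)) :=
      (ih (fun a ha b hb => h a (List.mem_cons_of_mem _ ha) b hb)).cons c
    have h2 : Eqv r (c :: (w ++ t)) (w ++ c :: t) :=
      (eqv_move_front (fun b hb => hs (h c List.mem_cons_self b hb))).symm
    simpa using h1.trans h2

theorem eqv_cancel_replicate (hs : Symmetric r) (hne : ∀ a b, r a b → a ≠ b) :
    ∀ (k : ℕ) {u v : List α}, Eqv r (List.replicate k a ++ u) (List.replicate k a ++ v) →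
      Eqv r u v := by
  intro k
  induction k with
  | zero => intro u v h; simpa using h
  | succ n ih =>
    intro u v h
    simp only [List.replicate_succ, List.cons_append] at h
    exact ih (eqv_cancel_head hs hne h)

end GenericExtra

section CWords

variable {V : Type*} [DecidableEq V] {Γ : SimpleGraph V} {i j : V}

/-- Adjacency on letters-with-multiplicity. -/
def radj (Γ : SimpleGraph V) : V × ℕ → V × ℕ → Prop := fun p q => Γ.Adj p.1 q.1

theorem radj_symm : Symmetric (radj Γ) := fun _ _ h => adj_symm h
theorem radj_ne : ∀ p q : V × ℕ, radj Γ p q → p ≠ q :=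
  fun p q h hpq => (adj_ne p.1 q.1 h) (by rw [hpq])

/-- Flatten a word with multiplicities (multiplicity `a` encodes `a+1` copies). -/
def flatC : List (V × ℕ) → List V := fun c => c.flatMap fun p => List.replicate (p.2 + 1) p.1

theorem flatC_nil : flatC ([] : List (V × ℕ)) = [] := rfl

theorem flatC_cons (x : V × ℕ) (c : List (V × ℕ)) :
    flatC (x :: c) = List.replicate (x.2 + 1) x.1 ++ flatC c := rfl

theorem flatC_append (c d : List (V × ℕ)) : flatC (c ++ d) = flatC c ++ flatC d := by
  simp [flatC]

theorem mem_flatC {b : V} {c : List (V × ℕ)} : b ∈ flatC c ↔ b ∈ c.map Prod.fst := by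
  simp only [flatC, List.mem_flatMap, List.mem_replicate, List.mem_map]
  constructor
  · rintro ⟨p, hp, -, rfl⟩; exact ⟨p, hp, rfl⟩
  · rintro ⟨p, hp, rfl⟩; exact ⟨p, hp, by simp⟩

theorem step_support {c c' : List (V × ℕ)} (h : Step (radj Γ) c c') :
    Step Γ.Adj (c.map Prod.fst) (c'.map Prod.fst) := by
  obtain ⟨p, q, x, y, hr, rfl, rfl⟩ := h
  exact ⟨p.map Prod.fst, q.map Prod.fst, x.1, y.1, hr, by simp, by simp⟩

theorem eqv_support {c c' : List (V × ℕ)} (h : Eqv (radj Γ) c c') :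
    Eqv Γ.Adj (c.map Prod.fst) (c'.map Prod.fst) := by
  induction h with
  | rel x y h => exact (step_support h).eqv
  | refl x => exact Eqv.refl _
  | symm x y _ ih => exact ih.symm
  | trans x y z _ _ ih1 ih2 => exact ih1.trans ih2

theorem step_flat {c c' : List (V × ℕ)} (h : Step (radj Γ) c c') :
    Eqv Γ.Adj (flatC c) (flatC c') := by
  obtain ⟨p, q, x, y, hr, rfl, rfl⟩ := h
  rw [flatC_append, flatC_append, flatC_cons, flatC_cons, flatC_cons, flatC_cons]
  apply Eqv.append_left
  rw [← List.append_assoc, ← List.append_assoc]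
  apply Eqv.append_right
  apply eqv_swap_blocks adj_symm
  intro a ha b hb
  rw [List.eq_of_mem_replicate ha, List.eq_of_mem_replicate hb]
  exact hr

theorem eqv_flat {c c' : List (V × ℕ)} (h : Eqv (radj Γ) c c') :
    Eqv Γ.Adj (flatC c) (flatC c') := by
  induction h with
  | rel x y h => exact step_flat h
  | refl x => exact Eqv.refl _
  | symm x y _ ih => exact ih.symm
  | trans x y z _ _ ih1 ih2 => exact ih1.trans ih2

theorem step_lift {c : List (V × ℕ)} {s' : List V}
    (h : Step Γ.Adj (c.map Prod.fst) s') :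
    ∃ c', Step (radj Γ) c c' ∧ c'.map Prod.fst = s' := by
  obtain ⟨p, q, a, b, hr, hm, rfl⟩ := h
  rw [List.map_eq_append_iff] at hm
  obtain ⟨cp, rest, rfl, hcp, hrest⟩ := hm
  rw [List.map_eq_cons_iff] at hrest
  obtain ⟨x, rest', rfl, hx, hrest'⟩ := hrest
  rw [List.map_eq_cons_iff] at hrest'
  obtain ⟨y, cq, rfl, hy, hcq⟩ := hrest'
  refine ⟨cp ++ y :: x :: cq, ⟨cp, cq, x, y, ?_, rfl, rfl⟩, ?_⟩
  · rw [radj, hx, hy]; exact hr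
  · simp [hcp, hx, hy, hcq]

theorem lift_support {c : List (V × ℕ)} {s' : List V}
    (h : Eqv Γ.Adj (c.map Prod.fst) s') :
    ∃ c', Eqv (radj Γ) c c' ∧ c'.map Prod.fst = s' := by
  rw [eqv_iff_rtg adj_symm] at h
  induction h with
  | refl => exact ⟨c, Eqv.refl _, rfl⟩
  | tail _ h2 ih =>
    obtain ⟨c', hc', hmap⟩ := ih
    obtain ⟨c'', hc'', hmap'⟩ := step_lift (hmap ▸ h2)
    exact ⟨c'', hc'.trans hc''.eqv, hmap'⟩

theorem fst_filter_ext : ∀ (c c' : List (V × ℕ)),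
    c.map Prod.fst = c'.map Prod.fst →
    (∀ v : V, c.filter (fun p => decide (p.1 = v)) = c'.filter (fun p => decide (p.1 = v))) →
    c = c' := by
  intro c
  induction c with
  | nil =>
    intro c' hmap _
    exact (List.map_eq_nil_iff.mp hmap.symm).symm
  | cons x t ih =>
    intro c' hmap hfil
    cases c' with
    | nil => simp at hmap
    | cons y t' =>
      simp only [List.map_cons, List.cons.injEq] at hmap
      obtain ⟨h1, h2⟩ := hmap
      have hx := hfil x.1
      rw [List.filter_cons, List.filter_cons] at hx
      rw [if_pos (by simp), if_pos (by simp [h1])] at hx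
      injection hx with h3 h4
      subst h3
      congr 1
      refine ih t' h2 (fun v => ?_)
      by_cases hv : x.1 = v
      · have := hfil v
        rw [List.filter_cons, List.filter_cons, if_pos (by simp [hv]), if_pos (by simp [hv])]
          at this
        exact List.cons_injective this
      · have := hfil v
        rwa [List.filter_cons, List.filter_cons, if_neg (by simp [hv]), if_neg (by simp [hv])]
          at this

theorem eqv_cwords_eq {c c' : List (V × ℕ)} (h : Eqv (radj Γ) c c')
    (hmap : c.map Prod.fst = c'.map Prod.fst) : c = c' := by
  refine fst_filter_ext c c' hmap (fun v => ?_)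
  refine h.filter _ (fun p q hr => ?_)
  simp only [decide_eq_true_eq, not_and]
  intro hp hq
  exact (adj_ne p.1 q.1 hr) (by rw [hp, hq])

theorem flat_LT_support {c : List (V × ℕ)} (h : LTm Γ (mk Γ (flatC c)) i) :
    ∃ cp e cq, c = cp ++ e :: cq ∧ e.1 = i ∧ i ∉ cp.map Prod.fst ∧
      ∀ x ∈ cp, Γ.Adj x.1 i := by
  obtain ⟨u, hu⟩ := h
  have heqv : Eqv Γ.Adj (i :: u) (flatC c) := mk_eq_mk_iff.mp hu
  have hmem : i ∈ flatC c := by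
    have hp := heqv.proj (a := i) (b := i) adj_symm adj_ne (Or.inl rfl)
    rw [proj_cons (by simp)] at hp
    exact List.mem_of_mem_filter (hp ▸ List.mem_cons_self (a := i))
  obtain ⟨p, q, hmap, hnp⟩ := exists_first (mem_flatC.mp hmem)
  rw [List.map_eq_append_iff] at hmap
  obtain ⟨cp, rest, rfl, hcp, hrest⟩ := hmap
  rw [List.map_eq_cons_iff] at hrest
  obtain ⟨e, cq, rfl, he, hcq⟩ := hrest
  refine ⟨cp, e, cq, rfl, he, by rw [hcp]; exact hnp, ?_⟩
  intro x hx
  by_contra hnadj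
  have hxp : x.1 ∈ p := by rw [← hcp]; exact List.mem_map_of_mem hx
  have hxb : x.1 ≠ i := fun hxe => hnp (hxe ▸ hxp)
  have hnadj' : ¬ Γ.Adj i x.1 := fun hadj => hnadj (adj_symm hadj)
  have hP := heqv.proj adj_symm adj_ne (Or.inr hnadj')
  rw [proj_cons (by simp)] at hP
  rw [flatC_append, flatC_cons] at hP
  have hsplit : Proj i x.1 (flatC cp ++ (List.replicate (e.2 + 1) e.1 ++ flatC cq))
      = Proj i x.1 (flatC cp) ++ Proj i x.1 (List.replicate (e.2 + 1) e.1 ++ flatC cq) := by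
    simp [Proj, List.filter_append]
  rw [hsplit] at hP
  have hbmem : x.1 ∈ Proj i x.1 (flatC cp) :=
    List.mem_filter.mpr ⟨mem_flatC.mpr (List.mem_map_of_mem hx), by simp⟩
  cases hF : Proj i x.1 (flatC cp) with
  | nil => rw [hF] at hbmem; simp at hbmem
  | cons f fs =>
    rw [hF] at hP
    have hfi : i = f := by
      have := congrArg List.head? hP
      simpa using this
    have hfcp : f ∈ flatC cp := List.mem_of_mem_filter (hF ▸ List.mem_cons_self (a := f) (l := fs))
    rw [← hfi] at hfcp
    exact hnp (hcp ▸ mem_flatC.mp hfcp)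

/-- Existence of a condensed representative with square-free support. -/
theorem exists_condensed (w : List V) :
    ∃ c : List (V × ℕ), Eqv Γ.Adj w (flatC c) ∧ SF Γ (mk Γ (c.map Prod.fst)) := by
  induction w with
  | nil => exact ⟨[], Eqv.refl _, SF_one⟩
  | cons i w' ih =>
    obtain ⟨c', heqv, hSF⟩ := ih
    by_cases h : LTm Γ (mk Γ (c'.map Prod.fst)) i
    · obtain ⟨u, hu⟩ := h
      obtain ⟨p, q, hpq, hnp, hall, _⟩ := extract_of_mk_eq hu
      rw [List.map_eq_append_iff] at hpq
      obtain ⟨cp, rest, rfl, hcp, hrest⟩ := hpq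
      rw [List.map_eq_cons_iff] at hrest
      obtain ⟨e, cq, rfl, he, hcq⟩ := hrest
      have hadjflat : ∀ b ∈ flatC cp, Γ.Adj b i := by
        intro b hb
        exact hall b (hcp ▸ mem_flatC.mp hb)
      refine ⟨(i, e.2 + 1) :: (cp ++ cq), ?_, ?_⟩
      · rw [flatC_cons]
        have h1 : Eqv Γ.Adj (i :: w') (i :: flatC (cp ++ e :: cq)) := heqv.cons i
        have h2 : Eqv Γ.Adj (flatC (cp ++ e :: cq))
            (List.replicate (e.2 + 1) i ++ (flatC cp ++ flatC cq)) := by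
          rw [flatC_append, flatC_cons, he]
          have hsw : Eqv Γ.Adj (flatC cp ++ List.replicate (e.2 + 1) i)
              (List.replicate (e.2 + 1) i ++ flatC cp) := by
            apply eqv_swap_blocks adj_symm
            intro a ha b hb
            rw [List.eq_of_mem_replicate hb]
            exact hadjflat a ha
          have := hsw.append_right (flatC cq)
          simpa [List.append_assoc] using this
        refine h1.trans ?_
        have h3 := h2.cons i
        refine h3.trans (Eqv.refl _ |>.trans ?_)
        have : (i :: (List.replicate (e.2 + 1) i ++ (flatC cp ++ flatC cq)))
            = List.replicate (i, e.2 + 1).2.succ (i, e.2 + 1).1 ++ flatC (cp ++ cq) := by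
          simp [List.replicate_succ, flatC_append]
        rw [this]
        exact Eqv.refl _
      · have hmk : mk Γ (((i, e.2 + 1) :: (cp ++ cq)).map Prod.fst)
            = mk Γ ((cp ++ e :: cq).map Prod.fst) := by
          simp only [List.map_cons, List.map_append, List.map_cons]
          apply mk_eq_mk_iff.mpr
          have : Eqv Γ.Adj (cp.map Prod.fst ++ e.1 :: cq.map Prod.fst)
              (e.1 :: (cp.map Prod.fst ++ cq.map Prod.fst)) := by
            apply eqv_move_front
            intro b hb
            rw [he]
            exact hall b (hcp ▸ hb)
          rw [he] at this ⊢
          exact this.symm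
        rw [hmk]
        exact hSF
    · refine ⟨(i, 0) :: c', ?_, ?_⟩
      · rw [flatC_cons]
        simpa using heqv.cons i
      · rw [List.map_cons]
        have := hSF.notLT_mul h
        rwa [← mk_cons] at this

theorem flat_eqv_unique : ∀ (c₁ c₂ : List (V × ℕ)),
    Eqv Γ.Adj (flatC c₁) (flatC c₂) →
    SF Γ (mk Γ (c₁.map Prod.fst)) → SF Γ (mk Γ (c₂.map Prod.fst)) →
    Eqv (radj Γ) c₁ c₂ := by
  intro c₁
  induction c₁ with
  | nil =>
    intro c₂ h _ _
    cases c₂ with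
    | nil => exact Eqv.refl _
    | cons y t =>
      exfalso
      have := h.length
      rw [flatC_nil, flatC_cons] at this
      simp at this
      omega
  | cons x c₁' ih =>
    intro c₂ h hSF1 hSF2
    have hflat1 : flatC (x :: c₁') = x.1 :: (List.replicate x.2 x.1 ++ flatC c₁') := by
      rw [flatC_cons, List.replicate_succ, List.cons_append]
    have hLT : LTm Γ (mk Γ (flatC c₂)) x.1 :=
      ⟨List.replicate x.2 x.1 ++ flatC c₁', mk_eq_mk_iff.mpr (hflat1 ▸ h)⟩
    obtain ⟨cp, e, cq, rfl, he, hnp, hadj⟩ := flat_LT_support hLT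
    have hmv : Eqv (radj Γ) (cp ++ e :: cq) (e :: (cp ++ cq)) :=
      eqv_move_front (fun y hy => by rw [radj, he]; exact hadj y hy)
    have hflat2 : Eqv Γ.Adj (flatC (cp ++ e :: cq))
        (List.replicate (e.2 + 1) x.1 ++ flatC (cp ++ cq)) := by
      have h2 := eqv_flat hmv
      rwa [flatC_cons (x := e), he] at h2
    have hcomb : Eqv Γ.Adj (List.replicate (x.2 + 1) x.1 ++ flatC c₁')
        (List.replicate (e.2 + 1) x.1 ++ flatC (cp ++ cq)) := by
      have h' : Eqv Γ.Adj (flatC (x :: c₁')) (flatC (cp ++ e :: cq)) := h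
      rw [flatC_cons] at h'
      exact h'.trans hflat2
    have hS1' : SF Γ (mk Γ (c₁'.map Prod.fst)) := by
      have hm : (x :: c₁').map Prod.fst = x.1 :: c₁'.map Prod.fst := by simp
      rw [hm] at hSF1
      exact hSF1.tail
    have hsup2 : mk Γ ((cp ++ e :: cq).map Prod.fst)
        = mk Γ (x.1 :: (cp ++ cq).map Prod.fst) := by
      apply mk_eq_mk_iff.mpr
      have h2 := eqv_support hmv
      simpa [he] using h2
    have hSF2' : SF Γ (mk Γ ((cp ++ cq).map Prod.fst)) := by
      rw [hsup2] at hSF2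
      exact hSF2.tail
    rcases lt_trichotomy x.2 e.2 with hlt | heqc | hgt
    · exfalso
      have hsplit : List.replicate (e.2 + 1) x.1
          = List.replicate (x.2 + 1) x.1 ++ List.replicate (e.2 - x.2) x.1 := by
        rw [← List.replicate_add]
        congr 1
        omega
      rw [hsplit, List.append_assoc] at hcomb
      have hc := eqv_cancel_replicate adj_symm adj_ne (x.2 + 1) hcomb
      have hLT' : LTm Γ (mk Γ (flatC c₁')) x.1 := by
        refine ⟨List.replicate (e.2 - x.2 - 1) x.1 ++ flatC (cp ++ cq), ?_⟩
        apply mk_eq_mk_iff.mpr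
        have hrep : List.replicate (e.2 - x.2) x.1
            = x.1 :: List.replicate (e.2 - x.2 - 1) x.1 := by
          rw [← List.replicate_succ]
          congr 1
          omega
        rw [hrep, List.cons_append] at hc
        exact hc.symm
      obtain ⟨dp, f, dq, hc1', hf, hdnp, hdadj⟩ := flat_LT_support hLT'
      refine hSF1 (x.1 :: x.1 :: (dp.map Prod.fst ++ dq.map Prod.fst)) ?_
        ⟨[], x.1, _, rfl⟩
      have hm : (x :: c₁').map Prod.fst
          = x.1 :: (dp.map Prod.fst ++ x.1 :: dq.map Prod.fst) := by
        simp [hc1', hf]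
      rw [hm]
      apply mk_eq_mk_iff.mpr
      apply Eqv.cons
      refine (eqv_move_front (fun b hb => ?_)).symm
      obtain ⟨y, hy, rfl⟩ := List.mem_map.mp hb
      exact hdadj y hy
    · -- equal multiplicities
      rw [← heqc] at hcomb
      have hc := eqv_cancel_replicate adj_symm adj_ne (x.2 + 1) hcomb
      have hih := ih (cp ++ cq) hc hS1' hSF2'
      have hxe : x = e := Prod.ext he.symm heqc
      refine ((hih.cons x).trans ?_)
      rw [hxe]
      exact hmv.symm
    · exfalso
      have hsplit : List.replicate (x.2 + 1) x.1
          = List.replicate (e.2 + 1) x.1 ++ List.replicate (x.2 - e.2) x.1 := by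
        rw [← List.replicate_add]
        congr 1
        omega
      rw [hsplit, List.append_assoc] at hcomb
      have hc := eqv_cancel_replicate adj_symm adj_ne (e.2 + 1) hcomb
      have hLT' : LTm Γ (mk Γ (flatC (cp ++ cq))) x.1 := by
        refine ⟨List.replicate (x.2 - e.2 - 1) x.1 ++ flatC c₁', ?_⟩
        apply mk_eq_mk_iff.mpr
        have hrep : List.replicate (x.2 - e.2) x.1
            = x.1 :: List.replicate (x.2 - e.2 - 1) x.1 := by
          rw [← List.replicate_succ]
          congr 1
          omega
        rw [hrep, List.cons_append] at hc
        exact hc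
      obtain ⟨dp, f, dq, hc2', hf, hdnp, hdadj⟩ := flat_LT_support hLT'
      refine hSF2 (x.1 :: x.1 :: (dp.map Prod.fst ++ dq.map Prod.fst)) ?_
        ⟨[], x.1, _, rfl⟩
      rw [hsup2]
      have hm : (cp ++ cq).map Prod.fst
          = dp.map Prod.fst ++ x.1 :: dq.map Prod.fst := by
        simp [hc2', hf]
      rw [hm]
      apply mk_eq_mk_iff.mpr
      apply Eqv.cons
      refine (eqv_move_front (fun b hb => ?_)).symm
      obtain ⟨y, hy, rfl⟩ := List.mem_map.mp hb
      exact hdadj y hy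

end CWords

section Assembly

variable {V : Type*} [DecidableEq V] {Γ : SimpleGraph V}

/-- A canonical representative word. -/
noncomputable def nfw (Γ : SimpleGraph V) (x : GraphMonoid Γ) : List V :=
  (mk_surjective x).choose

theorem nfw_spec (x : GraphMonoid Γ) : mk Γ (nfw Γ x) = x :=
  (mk_surjective x).choose_spec

theorem nfw_length (x : GraphMonoid Γ) :
    (nfw Γ x).length = mlen (GraphMonoid.gen Γ) x := by
  conv_rhs => rw [← nfw_spec x]
  rw [mlen_mk]

theorem zip_map_fst_snd' {α β : Type*} : ∀ l : List (α × β), (l.map Prod.fst).zip (l.map Prod.snd) = l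
  | [] => rfl
  | x :: t => by simp [zip_map_fst_snd' t]

theorem flatC_length (c : List (V × ℕ)) :
    (flatC c).length = (c.map Prod.snd).sum + c.length := by
  induction c with
  | nil => simp [flatC_nil]
  | cons x t ih =>
    rw [flatC_cons]
    simp only [List.length_append, List.length_replicate, ih, List.map_cons, List.sum_cons,
      List.length_cons]
    omega

/-- The sigma type of (length, square-free element, composition)-triples. -/
def SGT (Γ : SimpleGraph V) (n : ℕ) :=
  Σ k : {k : ℕ // k ∈ Finset.Icc 1 n},
    {y : GraphMonoid Γ // SF Γ y ∧ mlen (GraphMonoid.gen Γ) y = k.1} ×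
      {l : List ℕ // l.length = k.1 ∧ l.sum + k.1 = n}

noncomputable def bigPsi (Γ : SimpleGraph V) (n : ℕ) (t : SGT Γ n) :
    {x : GraphMonoid Γ // mlen (GraphMonoid.gen Γ) x = n} := by
  refine ⟨mk Γ (flatC ((nfw Γ t.2.1.1).zip t.2.2.1)), ?_⟩
  obtain ⟨⟨k, hk⟩, ⟨y, hy⟩, ⟨l, hl⟩⟩ := t
  have hlen : (nfw Γ y).length = k := by rw [nfw_length]; exact hy.2
  have hzlen : ((nfw Γ y).zip l).length = k := by
    rw [List.length_zip, hlen, hl.1, min_self]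
  have hsnd : ((nfw Γ y).zip l).map Prod.snd = l :=
    List.map_snd_zip (by rw [hlen, hl.1])
  rw [mlen_mk, flatC_length, hzlen, hsnd, hl.2]

theorem bigPsi_injective (n : ℕ) : Function.Injective (bigPsi Γ n) := by
  rintro ⟨⟨k, hk⟩, ⟨y, hy⟩, ⟨l, hl⟩⟩ ⟨⟨k', hk'⟩, ⟨y', hy'⟩, ⟨l', hl'⟩⟩ heq
  simp only [bigPsi, Subtype.mk.injEq] at heq
  set c := (nfw Γ y).zip l with hc
  set c' := (nfw Γ y').zip l' with hc'
  have hlen : (nfw Γ y).length = k := by rw [nfw_length]; exact hy.2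
  have hlen' : (nfw Γ y').length = k' := by rw [nfw_length]; exact hy'.2
  have hfst : c.map Prod.fst = nfw Γ y := List.map_fst_zip (by rw [hlen, hl.1])
  have hfst' : c'.map Prod.fst = nfw Γ y' := List.map_fst_zip (by rw [hlen', hl'.1])
  have hSFc : SF Γ (mk Γ (c.map Prod.fst)) := by rw [hfst, nfw_spec]; exact hy.1
  have hSFc' : SF Γ (mk Γ (c'.map Prod.fst)) := by rw [hfst', nfw_spec]; exact hy'.1
  have heqv : Eqv (radj Γ) c c' :=
    flat_eqv_unique c c' (mk_eq_mk_iff.mp heq) hSFc hSFc'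
  have hyy : y = y' := by
    rw [← nfw_spec y, ← nfw_spec y', ← hfst, ← hfst']
    exact mk_eq_mk_iff.mpr (eqv_support heqv)
  have hkk : k = k' := by
    have h1 := hy.2
    have h2 := hy'.2
    simp only [] at h1 h2
    rw [← h1, ← h2, hyy]
  subst hkk
  subst hyy
  have hcc : c = c' := eqv_cwords_eq heqv (by rw [hfst, hfst'])
  have hll : l = l' := by
    have h1 : c.map Prod.snd = l := List.map_snd_zip (by rw [hlen, hl.1])
    have h2 : c'.map Prod.snd = l' := List.map_snd_zip (by rw [hlen', hl'.1])
    rw [← h1, ← h2, hcc]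
  subst hll
  rfl

theorem bigPsi_surjective (n : ℕ) (hn : 1 ≤ n) : Function.Surjective (bigPsi Γ n) := by
  rintro ⟨x, hx⟩
  obtain ⟨c, heqv, hSF⟩ := exists_condensed (Γ := Γ) (nfw Γ x)
  set y := mk Γ (c.map Prod.fst) with hy
  set k := c.length with hkdef
  have hflen : (flatC c).length = n := by
    rw [← heqv.length, nfw_length, hx]
  have hsum : (c.map Prod.snd).sum + k = n := by
    rw [← flatC_length]; exact hflen
  have hk1 : 1 ≤ k := by
    rcases c with _ | ⟨z, t⟩
    · exfalso; rw [flatC_nil] at hflen; simp at hflen; omega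
    · simp [hkdef]
  have hkn : k ≤ n := by omega
  have hmleny : mlen (GraphMonoid.gen Γ) y = k := by
    rw [hy, mlen_mk, List.length_map]
  -- retarget c to the canonical word of y
  have hsupEqv : Eqv Γ.Adj (c.map Prod.fst) (nfw Γ y) := by
    apply mk_eq_mk_iff.mp
    rw [nfw_spec]
  obtain ⟨c', hc', hmap'⟩ := lift_support hsupEqv
  have hclen' : c'.length = k := by
    have := (eqv_support hc').length
    simpa using this.symm
  have hnfwlen : (nfw Γ y).length = k := by rw [nfw_length, hmleny]
  have hl'len : (c'.map Prod.snd).length = k := by simp [hclen']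
  have hzip : (nfw Γ y).zip (c'.map Prod.snd) = c' := by
    rw [← hmap']
    exact zip_map_fst_snd' c'
  have hflat' : mk Γ (flatC c') = x := by
    have h1 : mk Γ (flatC c') = mk Γ (flatC c) := mk_eq_mk_iff.mpr (eqv_flat hc').symm
    rw [h1, ← nfw_spec x]
    exact mk_eq_mk_iff.mpr heqv.symm
  have hsum' : (c'.map Prod.snd).sum + k = n := by
    have h2 : (flatC c').length = (flatC c).length := (eqv_flat hc').length.symm
    rw [flatC_length, hclen'] at h2
    omega
  refine ⟨⟨⟨k, Finset.mem_Icc.mpr ⟨hk1, hkn⟩⟩, ⟨y, hSF, hmleny⟩,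
    ⟨c'.map Prod.snd, hl'len, hsum'⟩⟩, ?_⟩
  apply Subtype.ext
  simp only [bigPsi]
  rw [hzip, hflat']

end Assembly

section Counting

variable {V : Type*} [DecidableEq V] {Γ : SimpleGraph V}

theorem nat_card_sigma {ι : Type*} [Fintype ι] (f : ι → Type*) [∀ i, Finite (f i)] :
    Nat.card (Σ i, f i) = ∑ i, Nat.card (f i) := by
  classical
  haveI := fun i => Fintype.ofFinite (f i)
  simp [Nat.card_eq_fintype_card, Fintype.card_sigma]

noncomputable def compFunEquiv (k s : ℕ) :
    {P : Fin k → ℕ // ∑ i, P i = s} ≃ {l : List ℕ // l.length = k ∧ l.sum = s} := by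
  refine Equiv.ofBijective
    (fun P => ⟨List.ofFn P.1, by simp, by rw [List.sum_ofFn]; exact P.2⟩) ⟨?_, ?_⟩
  · intro P Q h
    simp only [Subtype.mk.injEq] at h
    exact Subtype.ext (List.ofFn_injective h)
  · rintro ⟨l, hl, hs⟩
    have hofn : List.ofFn (fun i : Fin k => l.get (Fin.cast hl.symm i)) = l := by
      apply List.ext_get (by simp [hl])
      intro i h1 h2
      simp
    refine ⟨⟨fun i => l.get (Fin.cast hl.symm i), ?_⟩, ?_⟩
    · rw [← List.sum_ofFn, hofn]
      exact hs
    · apply Subtype.ext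
      simpa using hofn
  
theorem card_comp_eq (k s : ℕ) :
    Nat.card {l : List ℕ // l.length = k ∧ l.sum = s} = Nat.multichoose k s := by
  rw [← Nat.card_congr (compFunEquiv k s)]
  rw [← Nat.card_congr (Sym.equivNatSumOfFintype (Fin k) s)]
  rw [Nat.card_eq_fintype_card, Sym.card_sym_eq_multichoose, Fintype.card_fin]

instance finite_comp (k s : ℕ) : Finite {l : List ℕ // l.length = k ∧ l.sum = s} :=
  Finite.of_equiv _ ((Sym.equivNatSumOfFintype (Fin k) s).trans (compFunEquiv k s))

noncomputable def racgSFEquiv (Γ : SimpleGraph V) (k : ℕ) :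
    {g : RACG Γ // mlen (RACG.gen Γ) g = k} ≃
      {y : GraphMonoid Γ // SF Γ y ∧ mlen (GraphMonoid.gen Γ) y = k} := by
  refine ((Equiv.ofBijective (Amap Γ) ⟨Amap_injective, Amap_surjective⟩).subtypeEquiv
    (fun g => ?_)).trans (Equiv.subtypeSubtypeEquivSubtypeInter _ _)
  rw [mlen_racg_eq]
  rfl

theorem finite_mlen [Finite V] (k : ℕ) :
    Finite {x : GraphMonoid Γ // mlen (GraphMonoid.gen Γ) x = k} := by
  have hsf : Function.Surjective
      (fun g : Fin k → V => (⟨mk Γ (List.ofFn g), by rw [mlen_mk]; simp⟩ :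
        {x : GraphMonoid Γ // mlen (GraphMonoid.gen Γ) x = k})) := by
    rintro ⟨x, hx⟩
    have hlen : (nfw Γ x).length = k := by rw [nfw_length, hx]
    refine ⟨fun i => (nfw Γ x).get (Fin.cast hlen.symm i), ?_⟩
    apply Subtype.ext
    simp only
    have hofn : List.ofFn (fun i : Fin k => (nfw Γ x).get (Fin.cast hlen.symm i)) = nfw Γ x := by
      apply List.ext_get (by simp [hlen])
      intro i h1 h2
      simp
    rw [hofn, nfw_spec]
  exact Finite.of_surjective _ hsf

theorem finite_sf_mlen [Finite V] (k : ℕ) :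
    Finite {y : GraphMonoid Γ // SF Γ y ∧ mlen (GraphMonoid.gen Γ) y = k} := by
  haveI := finite_mlen (Γ := Γ) k
  exact Finite.of_injective
    (fun y => (⟨y.1, y.2.2⟩ : {x : GraphMonoid Γ // mlen (GraphMonoid.gen Γ) x = k}))
    (by
      intro a b h
      apply Subtype.ext
      have := congrArg Subtype.val h
      simpa using this)

theorem main_counting [Finite V] (Γ : SimpleGraph V) (n : ℕ) (hn : 1 ≤ n) :
    Nat.card {x : GraphMonoid Γ // mlen (GraphMonoid.gen Γ) x = n} =
      ∑ k ∈ Finset.Icc 1 n,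
        Nat.card {x : RACG Γ // mlen (RACG.gen Γ) x = k} * (n - 1).choose (k - 1) := by
  have e0 : {x : GraphMonoid Γ // mlen (GraphMonoid.gen Γ) x = n} ≃ SGT Γ n :=
    (Equiv.ofBijective (bigPsi Γ n) ⟨bigPsi_injective n, bigPsi_surjective n hn⟩).symm
  rw [Nat.card_congr e0]
  haveI hfib : ∀ k : {k : ℕ // k ∈ Finset.Icc 1 n},
      Finite ({y : GraphMonoid Γ // SF Γ y ∧ mlen (GraphMonoid.gen Γ) y = k.1} ×
        {l : List ℕ // l.length = k.1 ∧ l.sum + k.1 = n}) := by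
    intro k
    haveI h1 := finite_sf_mlen (Γ := Γ) k.1
    haveI h2 : Finite {l : List ℕ // l.length = k.1 ∧ l.sum + k.1 = n} := by
      refine Finite.of_injective
        (fun l => (⟨l.1, l.2.1, by omega⟩ : {l : List ℕ // l.length = k.1 ∧ l.sum = n - k.1}))
        ?_
      · intro a b h
        apply Subtype.ext
        have := congrArg Subtype.val h
        simpa using this
    infer_instance
  rw [show Nat.card (SGT Γ n) = ∑ k : {k : ℕ // k ∈ Finset.Icc 1 n},
      Nat.card ({y : GraphMonoid Γ // SF Γ y ∧ mlen (GraphMonoid.gen Γ) y = k.1} ×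
        {l : List ℕ // l.length = k.1 ∧ l.sum + k.1 = n}) from nat_card_sigma _]
  rw [Finset.sum_coe_sort (Finset.Icc 1 n) (fun k =>
      Nat.card ({y : GraphMonoid Γ // SF Γ y ∧ mlen (GraphMonoid.gen Γ) y = k} ×
        {l : List ℕ // l.length = k ∧ l.sum + k = n}))]
  apply Finset.sum_congr rfl
  intro k hk
  obtain ⟨hk1, hkn⟩ := Finset.mem_Icc.mp hk
  rw [Nat.card_prod]
  congr 1
  · exact (Nat.card_congr (racgSFEquiv Γ k)).symm
  · have ecomp : {l : List ℕ // l.length = k ∧ l.sum + k = n}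
        ≃ {l : List ℕ // l.length = k ∧ l.sum = n - k} :=
      Equiv.subtypeEquivRight (fun l => by constructor <;> rintro ⟨h1, h2⟩ <;>
        exact ⟨h1, by omega⟩)
    rw [Nat.card_congr ecomp, card_comp_eq, Nat.multichoose_eq]
    have h1 : k + (n - k) - 1 = n - 1 := by omega
    rw [h1]
    have h2 : n - k = (n - 1) - (k - 1) := by omega
    rw [h2, Nat.choose_symm (by omega)]

end Counting

end MG


theorem monoid_racg_growth_relation (m : ℕ) (Γ : SimpleGraph (Fin m)) (n : ℕ) (hn : 1 ≤ n) :
    Nat.card {x : GraphMonoid Γ // mlen (GraphMonoid.gen Γ) x = n} =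
      ∑ k ∈ Finset.Icc 1 n,
        Nat.card {x : RACG Γ // mlen (RACG.gen Γ) x = k} * (n - 1).choose (k - 1) :=
  MG.main_counting Γ n hn
end

section
/- The spherical growth series of the graph monoid M(Γ) equals 1/p_Γ(-t) as a formal power series, where p_Γ is the clique polynomial of Γ. -/
open scoped Classical

variable {V : Type*} {M : Type*} {G : Type*}

namespace CFProof


variable {V : Type*} (Γ : SimpleGraph V)

def SRel (w w' : List V) : Prop :=
  ∃ (w1 w2 : List V) (i j : V), Γ.Adj i j ∧ w = w1 ++ i :: j :: w2 ∧ w' = w1 ++ j :: i :: w2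

def TEq : List V → List V → Prop := Relation.ReflTransGen (SRel Γ)

variable {Γ}

theorem SRel.symm {w w' : List V} (h : SRel Γ w w') : SRel Γ w' w := by
  obtain ⟨w1, w2, i, j, hadj, h1, h2⟩ := h
  exact ⟨w1, w2, j, i, hadj.symm, h2, h1⟩

theorem TEq.rfl {w : List V} : TEq Γ w w := Relation.ReflTransGen.refl

theorem TEq.symm {w w' : List V} (h : TEq Γ w w') : TEq Γ w' w :=
  by
    induction h with
    | refl => exact TEq.rfl
    | tail _ hs ih => exact Relation.ReflTransGen.head (SRel.symm hs) ih

theorem TEq.trans {a b c : List V} (h1 : TEq Γ a b) (h2 : TEq Γ b c) : TEq Γ a c :=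
  Relation.ReflTransGen.trans h1 h2

theorem TEq.single {w w' : List V} (h : SRel Γ w w') : TEq Γ w w' :=
  Relation.ReflTransGen.single h

theorem SRel.perm {w w' : List V} (h : SRel Γ w w') : w.Perm w' := by
  obtain ⟨w1, w2, i, j, _, rfl, rfl⟩ := h
  exact List.Perm.append_left w1 (List.Perm.swap j i w2)

theorem TEq.perm {w w' : List V} (h : TEq Γ w w') : w.Perm w' := by
  induction h with
  | refl => exact List.Perm.refl _
  | tail _ hstep ih => exact ih.trans hstep.perm

theorem SRel.append_left {w w' : List V} (u : List V) (h : SRel Γ w w') :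
    SRel Γ (u ++ w) (u ++ w') := by
  obtain ⟨w1, w2, i, j, hadj, rfl, rfl⟩ := h
  exact ⟨u ++ w1, w2, i, j, hadj, by simp, by simp⟩

theorem SRel.append_right {w w' : List V} (u : List V) (h : SRel Γ w w') :
    SRel Γ (w ++ u) (w' ++ u) := by
  obtain ⟨w1, w2, i, j, hadj, rfl, rfl⟩ := h
  exact ⟨w1, w2 ++ u, i, j, hadj, by simp, by simp⟩

theorem TEq.append_left {w w' : List V} (u : List V) (h : TEq Γ w w') :
    TEq Γ (u ++ w) (u ++ w') :=
  Relation.ReflTransGen.lift (u ++ ·) (fun (a b : List V) (hs : SRel Γ a b) => hs.append_left u) _ _ h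

theorem TEq.append_right {w w' : List V} (u : List V) (h : TEq Γ w w') :
    TEq Γ (w ++ u) (w' ++ u) :=
  Relation.ReflTransGen.lift (· ++ u) (fun (a b : List V) (hs : SRel Γ a b) => hs.append_right u) _ _ h

theorem TEq.append {a b c d : List V} (h1 : TEq Γ a b) (h2 : TEq Γ c d) :
    TEq Γ (a ++ c) (b ++ d) :=
  (h1.append_right c).trans (h2.append_left b)

theorem TEq.cons {w w' : List V} (a : V) (h : TEq Γ w w') : TEq Γ (a :: w) (a :: w') :=
  h.append_left [a]


section Proj

noncomputable def proj (a b : V) (w : List V) : List V :=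
  w.filter (fun x => decide (x = a ∨ x = b))

theorem proj_nil {a b : V} : proj a b ([] : List V) = [] := rfl

theorem proj_cons_pos {a b x : V} (w : List V) (h : x = a ∨ x = b) :
    proj a b (x :: w) = x :: proj a b w := by
  simp [proj, List.filter_cons, h]

theorem proj_cons_neg {a b x : V} (w : List V) (h : ¬(x = a ∨ x = b)) :
    proj a b (x :: w) = proj a b w := by
  simp [proj, List.filter_cons, h]

theorem proj_append (a b : V) (u v : List V) :
    proj a b (u ++ v) = proj a b u ++ proj a b v := by
  simp [proj, List.filter_append]

theorem mem_proj {a b y : V} {w : List V} : y ∈ proj a b w ↔ y ∈ w ∧ (y = a ∨ y = b) := by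
  simp [proj, List.mem_filter]

theorem SRel.proj_eq {w w' : List V} (h : SRel Γ w w') {a b : V}
    (hab : a = b ∨ ¬Γ.Adj a b) : proj a b w = proj a b w' := by
  obtain ⟨w1, w2, i, j, hadj, rfl, rfl⟩ := h
  rw [proj_append, proj_append]
  congr 1
  have hnot : ¬((i = a ∨ i = b) ∧ (j = a ∨ j = b)) := by
    rintro ⟨hi, hj⟩
    rcases hab with rfl | hnadj
    · rcases hi with rfl | rfl <;> rcases hj with rfl | rfl <;> exact hadj.ne rfl
    · rcases hi with rfl | rfl <;> rcases hj with rfl | rfl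
      · exact hadj.ne rfl
      · exact hnadj hadj
      · exact hnadj hadj.symm
      · exact hadj.ne rfl
  by_cases hi : (i = a ∨ i = b) <;> by_cases hj : (j = a ∨ j = b)
  · exact absurd ⟨hi, hj⟩ hnot
  · rw [proj_cons_pos _ hi, proj_cons_neg _ hj, proj_cons_neg _ hj, proj_cons_pos _ hi]
  · rw [proj_cons_neg _ hi, proj_cons_pos _ hj, proj_cons_pos _ hj, proj_cons_neg _ hi]
  · rw [proj_cons_neg _ hi, proj_cons_neg _ hj, proj_cons_neg _ hj, proj_cons_neg _ hi]

theorem TEq.proj_eq {w w' : List V} (h : TEq Γ w w') {a b : V}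
    (hab : a = b ∨ ¬Γ.Adj a b) : proj a b w = proj a b w' := by
  induction h with
  | refl => rfl
  | tail _ hstep ih => rw [ih, hstep.proj_eq hab]

theorem exists_first {u : V} {w : List V} (h : u ∈ w) :
    ∃ w1 w2, w = w1 ++ u :: w2 ∧ u ∉ w1 := by
  induction w with
  | nil => simp at h
  | cons x r ih =>
    by_cases hx : x = u
    · exact ⟨[], r, by simp [hx], by simp⟩
    · have hur : u ∈ r := by
        rcases List.mem_cons.mp h with h' | h'
        · exact absurd h'.symm hx
        · exact h'
      obtain ⟨w1, w2, rfl, hn⟩ := ih hur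
      refine ⟨x :: w1, w2, rfl, ?_⟩
      simp only [List.mem_cons, not_or]
      exact ⟨fun h' => hx h'.symm, hn⟩

theorem bubble {u : V} {w2 : List V} (w1 : List V) (h : ∀ x ∈ w1, Γ.Adj x u) :
    TEq Γ (w1 ++ u :: w2) (u :: (w1 ++ w2)) := by
  induction w1 with
  | nil => exact TEq.rfl
  | cons x r ih =>
    have h1 : TEq Γ (x :: (r ++ u :: w2)) (x :: u :: (r ++ w2)) :=
      TEq.cons x (ih (fun y hy => h y (List.mem_cons_of_mem x hy)))
    have h2 : SRel Γ (x :: u :: (r ++ w2)) (u :: x :: (r ++ w2)) :=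
      ⟨[], r ++ w2, x, u, h x (List.mem_cons_self), rfl, rfl⟩
    exact h1.trans (TEq.single h2)

theorem extract {u : V} {t w' : List V}
    (H : ∀ a b : V, (a = b ∨ ¬Γ.Adj a b) → proj a b (u :: t) = proj a b w') :
    ∃ w1 w2, w' = w1 ++ u :: w2 ∧ u ∉ w1 ∧ ∀ x ∈ w1, Γ.Adj x u := by
  have hu : u ∈ w' := by
    have h1 := H u u (Or.inl rfl)
    rw [proj_cons_pos _ (Or.inl rfl)] at h1
    have : u ∈ proj u u w' := by rw [← h1]; exact List.mem_cons_self
    exact (mem_proj.mp this).1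
  obtain ⟨w1, w2, rfl, hnotin⟩ := exists_first hu
  refine ⟨w1, w2, rfl, hnotin, ?_⟩
  intro x hx
  by_contra hnadj
  have hxu : x ≠ u := fun h => hnotin (h ▸ hx)
  have hproj := H u x (Or.inr (fun h => hnadj (by exact h.symm)))
  rw [proj_cons_pos _ (Or.inl rfl), proj_append, proj_cons_pos _ (Or.inl rfl)] at hproj
  cases hq : proj u x w1 with
  | nil =>
    have : x ∈ proj u x w1 := mem_proj.mpr ⟨hx, Or.inr rfl⟩
    rw [hq] at this
    simp at this
  | cons y ys =>
    have hy : y ∈ proj u x w1 := by rw [hq]; exact List.mem_cons_self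
    obtain ⟨hyw1, hyux⟩ := mem_proj.mp hy
    have hyx : y = x := by
      rcases hyux with rfl | rfl
      · exact absurd hyw1 hnotin
      · rfl
    rw [hq, List.cons_append] at hproj
    have := (List.cons_eq_cons.mp hproj).1
    exact hxu (by rw [← hyx, ← this])

theorem teq_of_proj {w w' : List V}
    (H : ∀ a b : V, (a = b ∨ ¬Γ.Adj a b) → proj a b w = proj a b w') : TEq Γ w w' := by
  induction w generalizing w' with
  | nil =>
    cases w' with
    | nil => exact TEq.rfl
    | cons c r =>
      have h1 := H c c (Or.inl rfl)
      rw [proj_cons_pos _ (Or.inl rfl)] at h1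
      exact absurd h1.symm (List.cons_ne_nil _ _)
  | cons u t ih =>
    obtain ⟨w1, w2, rfl, hnotin, hadj⟩ := extract H
    have hb : TEq Γ (w1 ++ u :: w2) (u :: (w1 ++ w2)) := bubble w1 hadj
    have H2 : ∀ a b : V, (a = b ∨ ¬Γ.Adj a b) → proj a b t = proj a b (w1 ++ w2) := by
      intro a b hab
      have h1 := H a b hab
      rw [hb.proj_eq hab] at h1
      by_cases hu : (u = a ∨ u = b)
      · rw [proj_cons_pos _ hu, proj_cons_pos _ hu] at h1
        exact (List.cons_eq_cons.mp h1).2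
      · rw [proj_cons_neg _ hu, proj_cons_neg _ hu] at h1
        exact h1
    exact (TEq.cons u (ih H2)).trans hb.symm

theorem teq_iff_proj {w w' : List V} :
    TEq Γ w w' ↔ ∀ a b : V, (a = b ∨ ¬Γ.Adj a b) → proj a b w = proj a b w' :=
  ⟨fun h _ _ hab => h.proj_eq hab, teq_of_proj⟩

theorem teq_cancel {v : V} {w1 w2 : List V} (h : TEq Γ (v :: w1) (v :: w2)) :
    TEq Γ w1 w2 := by
  apply teq_of_proj
  intro a b hab
  have h1 := h.proj_eq hab
  by_cases hv : (v = a ∨ v = b)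
  · rw [proj_cons_pos _ hv, proj_cons_pos _ hv] at h1
    exact (List.cons_eq_cons.mp h1).2
  · rwa [proj_cons_neg _ hv, proj_cons_neg _ hv] at h1

theorem teq_head_cases {u v : V} {w w' : List V} (hne : u ≠ v)
    (h : TEq Γ (v :: w) (u :: w')) :
    Γ.Adj v u ∧ ∃ w'', TEq Γ w (u :: w'') := by
  have hadj : Γ.Adj v u := by
    by_contra hn
    have h1 := h.proj_eq (Or.inr hn)
    rw [proj_cons_pos _ (Or.inl rfl), proj_cons_pos _ (Or.inr rfl)] at h1
    exact hne ((List.cons_eq_cons.mp h1).1.symm)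
  obtain ⟨w1, w2, heq, hnotin, hadjall⟩ :=
    extract (fun a b hab => (h.symm : TEq Γ (u :: w') (v :: w)).proj_eq hab)
  cases w1 with
  | nil =>
    simp only [List.nil_append] at heq
    exact absurd (List.cons_eq_cons.mp heq).1.symm hne
  | cons a q =>
    rw [List.cons_append] at heq
    obtain ⟨rfl, hw⟩ := List.cons_eq_cons.mp heq
    subst hw
    refine ⟨hadj, q ++ w2, bubble q (fun x hx => hadjall x (List.mem_cons_of_mem _ hx))⟩

end Proj


section Monoid

variable (Γ)

theorem step_con {c d : List V} (h : SRel Γ c d) :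
    conGen (graphMonoidRel Γ) (FreeMonoid.ofList c) (FreeMonoid.ofList d) := by
  obtain ⟨w1, w2, i, j, hadj, rfl, rfl⟩ := h
  rw [FreeMonoid.ofList_append, FreeMonoid.ofList_append, FreeMonoid.ofList_cons,
    FreeMonoid.ofList_cons, FreeMonoid.ofList_cons, FreeMonoid.ofList_cons,
    ← mul_assoc (FreeMonoid.of i), ← mul_assoc (FreeMonoid.of j)]
  exact Con.mul _ (Con.refl _ _)
    (Con.mul _ (ConGen.Rel.of _ _ ⟨i, j, hadj, rfl, rfl⟩) (Con.refl _ _))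

theorem teq_con {c d : List V} (h : TEq Γ c d) :
    conGen (graphMonoidRel Γ) (FreeMonoid.ofList c) (FreeMonoid.ofList d) := by
  induction h with
  | refl => exact Con.refl _ _
  | tail _ hstep ih => exact Con.trans _ ih (step_con Γ hstep)

def traceCon : Con (FreeMonoid V) where
  r a b := TEq Γ a.toList b.toList
  iseqv := ⟨fun _ => TEq.rfl, TEq.symm, TEq.trans⟩
  mul' := fun h1 h2 => by simpa using TEq.append h1 h2

theorem con_iff {a b : FreeMonoid V} :
    conGen (graphMonoidRel Γ) a b ↔ TEq Γ a.toList b.toList := by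
  constructor
  · intro h
    refine (Con.conGen_le (c := traceCon Γ)).mpr ?_ h
    rintro x y ⟨i, j, hadj, rfl, rfl⟩
    exact TEq.single ⟨[], [], i, j, hadj, rfl, rfl⟩
  · intro h
    simpa [FreeMonoid.ofList_toList] using teq_con Γ h

abbrev mkm : FreeMonoid V →* GraphMonoid Γ := Con.mk' _

theorem mkm_eq_iff {a b : FreeMonoid V} :
    mkm Γ a = mkm Γ b ↔ TEq Γ a.toList b.toList :=
  Iff.trans (Con.eq _) (con_iff Γ)

theorem mkm_surjective : Function.Surjective (mkm Γ) := Con.mk'_surjective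

noncomputable def tlen (x : GraphMonoid Γ) : ℕ :=
  Con.liftOn x (fun w => w.toList.length) (fun _ _ h => ((con_iff Γ).mp h).perm.length_eq)

theorem tlen_mk (w : FreeMonoid V) : tlen Γ (mkm Γ w) = w.toList.length := rfl

theorem tlen_mul (x y : GraphMonoid Γ) : tlen Γ (x * y) = tlen Γ x + tlen Γ y := by
  obtain ⟨a, rfl⟩ := mkm_surjective Γ x
  obtain ⟨b, rfl⟩ := mkm_surjective Γ y
  rw [← map_mul, tlen_mk, tlen_mk, tlen_mk]
  simp

theorem tlen_one : tlen Γ (1 : GraphMonoid Γ) = 0 := by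
  have : (1 : GraphMonoid Γ) = mkm Γ 1 := (map_one _).symm
  rw [this, tlen_mk]
  rfl

theorem tlen_gen (i : V) : tlen Γ (GraphMonoid.gen Γ i) = 1 := rfl

theorem gen_eq (i : V) : GraphMonoid.gen Γ i = mkm Γ (FreeMonoid.of i) := rfl

theorem tlen_eq_zero {x : GraphMonoid Γ} : tlen Γ x = 0 ↔ x = 1 := by
  constructor
  · intro h
    obtain ⟨a, rfl⟩ := mkm_surjective Γ x
    rw [tlen_mk, List.length_eq_zero_iff] at h
    have : a = 1 := by
      apply FreeMonoid.toList.injective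
      simpa using h
    rw [this, map_one]
  · rintro rfl
    exact tlen_one Γ

theorem prod_map_gen (w : List V) :
    (w.map (GraphMonoid.gen Γ)).prod = mkm Γ (FreeMonoid.ofList w) := by
  induction w with
  | nil => simp [FreeMonoid.ofList_nil]
  | cons a t ih =>
    rw [List.map_cons, List.prod_cons, ih, FreeMonoid.ofList_cons, map_mul, gen_eq]

theorem mlen_eq (x : GraphMonoid Γ) : mlen (GraphMonoid.gen Γ) x = tlen Γ x := by
  have hset : {n | ∃ w : List V, (w.map (GraphMonoid.gen Γ)).prod = x ∧ w.length = n}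
      = {tlen Γ x} := by
    ext n
    simp only [Set.mem_setOf_eq, Set.mem_singleton_iff]
    constructor
    · rintro ⟨w, hw, rfl⟩
      rw [prod_map_gen] at hw
      rw [← hw, tlen_mk]
      rfl
    · rintro rfl
      obtain ⟨m, rfl⟩ := mkm_surjective Γ x
      exact ⟨m.toList, by rw [prod_map_gen, FreeMonoid.ofList_toList], (tlen_mk Γ m).symm⟩
  rw [mlen, hset, csInf_singleton]

def initS (x : GraphMonoid Γ) : Set V := {u | ∃ z, x = GraphMonoid.gen Γ u * z}

theorem exists_initS {x : GraphMonoid Γ} (hx : x ≠ 1) : ∃ u, u ∈ initS Γ x := by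
  obtain ⟨m, rfl⟩ := mkm_surjective Γ x
  cases hm : m.toList with
  | nil =>
    exfalso
    apply hx
    rw [← tlen_eq_zero, tlen_mk, hm]
    rfl
  | cons a t =>
    refine ⟨a, mkm Γ (FreeMonoid.ofList t), ?_⟩
    rw [gen_eq, ← map_mul, ← FreeMonoid.ofList_cons, ← hm, FreeMonoid.ofList_toList]

theorem toList_of_mul (v : V) (a : FreeMonoid V) :
    (FreeMonoid.of v * a).toList = v :: a.toList := rfl

theorem initS_mul_gen {u v : V} {y : GraphMonoid Γ} (hne : u ≠ v)
    (h : u ∈ initS Γ (GraphMonoid.gen Γ v * y)) : Γ.Adj v u ∧ u ∈ initS Γ y := by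
  obtain ⟨z, hz⟩ := h
  obtain ⟨a, rfl⟩ := mkm_surjective Γ y
  obtain ⟨b, rfl⟩ := mkm_surjective Γ z
  rw [gen_eq, gen_eq, ← map_mul, ← map_mul] at hz
  have hteq := (mkm_eq_iff Γ).mp hz
  rw [toList_of_mul, toList_of_mul] at hteq
  obtain ⟨hadj, w'', hw''⟩ := teq_head_cases hne hteq
  refine ⟨hadj, mkm Γ (FreeMonoid.ofList w''), ?_⟩
  rw [gen_eq, ← map_mul]
  apply (mkm_eq_iff Γ).mpr
  rw [toList_of_mul]
  simpa using hw''

theorem initS_mul_of_adj {u v : V} {y : GraphMonoid Γ} (hadj : Γ.Adj u v)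
    (h : u ∈ initS Γ y) : u ∈ initS Γ (GraphMonoid.gen Γ v * y) := by
  obtain ⟨z, rfl⟩ := h
  have hcomm : GraphMonoid.gen Γ v * GraphMonoid.gen Γ u
      = GraphMonoid.gen Γ u * GraphMonoid.gen Γ v := by
    rw [gen_eq, gen_eq, ← map_mul, ← map_mul]
    apply (mkm_eq_iff Γ).mpr
    exact TEq.single ⟨[], [], v, u, hadj.symm, rfl, rfl⟩
  exact ⟨GraphMonoid.gen Γ v * z, by rw [← mul_assoc, hcomm, mul_assoc]⟩

theorem gen_left_cancel {v : V} {y z : GraphMonoid Γ}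
    (h : GraphMonoid.gen Γ v * y = GraphMonoid.gen Γ v * z) : y = z := by
  obtain ⟨a, rfl⟩ := mkm_surjective Γ y
  obtain ⟨b, rfl⟩ := mkm_surjective Γ z
  rw [gen_eq, ← map_mul, ← map_mul] at h
  have hteq := (mkm_eq_iff Γ).mp h
  rw [toList_of_mul, toList_of_mul] at hteq
  exact (mkm_eq_iff Γ).mpr (teq_cancel hteq)

theorem ne_one_of_initS {u : V} {x : GraphMonoid Γ} (h : u ∈ initS Γ x) : x ≠ 1 := by
  obtain ⟨z, rfl⟩ := h
  intro hone
  have := tlen_eq_zero Γ |>.mpr hone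
  rw [tlen_mul, tlen_gen] at this
  omega

theorem tlen_gen_mul (v : V) (y : GraphMonoid Γ) :
    tlen Γ (GraphMonoid.gen Γ v * y) = tlen Γ y + 1 := by
  rw [tlen_mul, tlen_gen]
  omega

end Monoid


section Counting

variable (Γ) [Fintype V]

noncomputable def SF (n : ℕ) : Finset (GraphMonoid Γ) :=
  (Finset.univ : Finset (List.Vector V n)).image
    (fun w => mkm Γ (FreeMonoid.ofList w.toList))

theorem mem_SF {n : ℕ} {x : GraphMonoid Γ} : x ∈ SF Γ n ↔ tlen Γ x = n := by
  simp only [SF, Finset.mem_image, Finset.mem_univ, true_and]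
  constructor
  · rintro ⟨w, rfl⟩
    rw [tlen_mk]
    exact w.2
  · intro h
    obtain ⟨m, rfl⟩ := mkm_surjective Γ x
    refine ⟨⟨m.toList, by rw [tlen_mk] at h; exact h⟩, ?_⟩
    simp [FreeMonoid.ofList_toList]

theorem card_len (n : ℕ) :
    Nat.card {x : GraphMonoid Γ // mlen (GraphMonoid.gen Γ) x = n} = (SF Γ n).card := by
  have hset : {x : GraphMonoid Γ | mlen (GraphMonoid.gen Γ) x = n} = ↑(SF Γ n) := by
    ext x
    simp [mlen_eq, mem_SF]
  have h1 : Nat.card {x : GraphMonoid Γ // mlen (GraphMonoid.gen Γ) x = n}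
      = ({x : GraphMonoid Γ | mlen (GraphMonoid.gen Γ) x = n} : Set (GraphMonoid Γ)).ncard := rfl
  rw [h1, hset, Set.ncard_coe_finset]

theorem SF_zero : SF Γ 0 = {1} := by
  ext x
  simp [mem_SF, tlen_eq_zero]

noncomputable def fmin (s : Finset V) (h : s.Nonempty) : V :=
  (Fintype.equivFin V).symm ((s.image (Fintype.equivFin V)).min' (h.image _))

theorem fmin_mem (s : Finset V) (h : s.Nonempty) : fmin s h ∈ s := by
  have hm := (s.image (Fintype.equivFin V)).min'_mem (h.image _)
  obtain ⟨a, ha, hae⟩ := Finset.mem_image.mp hm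
  rw [fmin, ← hae, Equiv.symm_apply_apply]
  exact ha

theorem fmin_le (s : Finset V) (h : s.Nonempty) {u : V} (hu : u ∈ s) :
    Fintype.equivFin V (fmin s h) ≤ Fintype.equivFin V u := by
  rw [fmin, Equiv.apply_symm_apply]
  exact Finset.min'_le _ _ (Finset.mem_image_of_mem _ hu)

theorem fmin_eq (s : Finset V) (h : s.Nonempty) {v : V} (hv : v ∈ s)
    (hall : ∀ u ∈ s, Fintype.equivFin V v ≤ Fintype.equivFin V u) : fmin s h = v := by
  rw [fmin]
  have hmin : (s.image (Fintype.equivFin V)).min' (h.image _) = Fintype.equivFin V v := by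
    refine le_antisymm (Finset.min'_le _ _ (Finset.mem_image_of_mem _ hv)) ?_
    refine Finset.le_min' _ _ _ ?_
    rintro y hy
    obtain ⟨a, ha, rfl⟩ := Finset.mem_image.mp hy
    exact hall a ha
  rw [hmin, Equiv.symm_apply_apply]

noncomputable def TSet (p : Σ _ : Finset V, GraphMonoid Γ) : Finset V :=
  p.1 ∪ Finset.univ.filter (fun u => u ∈ initS Γ p.2 ∧ ∀ c ∈ p.1, Γ.Adj u c)

theorem mem_TSet {p : Σ _ : Finset V, GraphMonoid Γ} {u : V} :
    u ∈ TSet Γ p ↔ u ∈ p.1 ∨ (u ∈ initS Γ p.2 ∧ ∀ c ∈ p.1, Γ.Adj u c) := by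
  simp [TSet]

theorem TSet_nonempty {p : Σ _ : Finset V, GraphMonoid Γ}
    (hp : p.1.Nonempty ∨ p.2 ≠ 1) : (TSet Γ p).Nonempty := by
  rcases Finset.eq_empty_or_nonempty p.1 with he | hne
  · have hne : p.2 ≠ 1 := by
      rcases hp with hp | hp
      · rw [he] at hp; exact absurd hp Finset.not_nonempty_empty
      · exact hp
    obtain ⟨u, hu⟩ := exists_initS Γ hne
    exact ⟨u, (mem_TSet Γ).mpr (Or.inr ⟨hu, by simp [he]⟩)⟩
  · obtain ⟨a, ha⟩ := hne
    exact ⟨a, (mem_TSet Γ).mpr (Or.inl ha)⟩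

noncomputable def gmap (p : Σ _ : Finset V, GraphMonoid Γ) : Σ _ : Finset V, GraphMonoid Γ :=
  if h : (TSet Γ p).Nonempty then
    if hv : fmin (TSet Γ p) h ∈ p.1 then
      ⟨p.1.erase (fmin (TSet Γ p) h), GraphMonoid.gen Γ (fmin (TSet Γ p) h) * p.2⟩
    else
      ⟨insert (fmin (TSet Γ p) h) p.1,
        Classical.choose (show ∃ z, p.2 = GraphMonoid.gen Γ (fmin (TSet Γ p) h) * z from
          (((mem_TSet Γ).mp (fmin_mem _ h)).resolve_left hv).1)⟩
  else p

theorem gmap_eq_erase {p : Σ _ : Finset V, GraphMonoid Γ} (h : (TSet Γ p).Nonempty)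
    (hv : fmin (TSet Γ p) h ∈ p.1) :
    gmap Γ p = ⟨p.1.erase (fmin (TSet Γ p) h),
      GraphMonoid.gen Γ (fmin (TSet Γ p) h) * p.2⟩ := by
  rw [gmap, dif_pos h, dif_pos hv]

theorem gmap_eq_insert {p : Σ _ : Finset V, GraphMonoid Γ} (h : (TSet Γ p).Nonempty)
    (hv : fmin (TSet Γ p) h ∉ p.1) :
    ∃ z, p.2 = GraphMonoid.gen Γ (fmin (TSet Γ p) h) * z ∧
      gmap Γ p = ⟨insert (fmin (TSet Γ p) h) p.1, z⟩ := by
  refine ⟨_, Classical.choose_spec (show ∃ z, p.2 =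
    GraphMonoid.gen Γ (fmin (TSet Γ p) h) * z from
    (((mem_TSet Γ).mp (fmin_mem _ h)).resolve_left hv).1), ?_⟩
  rw [gmap, dif_pos h, dif_neg hv]

end Counting


section Involution

variable (Γ) [Fintype V]

theorem gmap_gmap {p : Σ _ : Finset V, GraphMonoid Γ} (hcl : Γ.IsClique (↑p.1 : Set V))
    (hp : p.1.Nonempty ∨ p.2 ≠ 1) : gmap Γ (gmap Γ p) = p := by
  obtain ⟨C, x⟩ := p
  have h : (TSet Γ ⟨C, x⟩).Nonempty := TSet_nonempty Γ hp
  set v := fmin (TSet Γ ⟨C, x⟩) h with hvdef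
  have hvmem : v ∈ TSet Γ ⟨C, x⟩ := fmin_mem _ h
  by_cases hv : v ∈ C
  · have hg1 : gmap Γ ⟨C, x⟩ = ⟨C.erase v, GraphMonoid.gen Γ v * x⟩ := gmap_eq_erase Γ h hv
    have hvT' : v ∈ TSet Γ ⟨C.erase v, GraphMonoid.gen Γ v * x⟩ := by
      apply (mem_TSet Γ).mpr
      refine Or.inr ⟨⟨x, rfl⟩, ?_⟩
      intro c hc
      have hcC : c ∈ C := Finset.mem_of_mem_erase hc
      have hcv : c ≠ v := Finset.ne_of_mem_erase hc
      exact hcl (Finset.mem_coe.mpr hv) (Finset.mem_coe.mpr hcC) (Ne.symm hcv)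
    have h' : (TSet Γ ⟨C.erase v, GraphMonoid.gen Γ v * x⟩).Nonempty := ⟨v, hvT'⟩
    have hmin' : fmin (TSet Γ ⟨C.erase v, GraphMonoid.gen Γ v * x⟩) h' = v := by
      apply fmin_eq _ h' hvT'
      intro u hu
      rcases (mem_TSet Γ).mp hu with huC | ⟨huinit, hadj⟩
      · exact fmin_le _ h ((mem_TSet Γ).mpr (Or.inl (Finset.mem_of_mem_erase huC)))
      · by_cases huv : u = v
        · rw [huv]
        · obtain ⟨hadjvu, huinitx⟩ := initS_mul_gen Γ huv huinit
          apply fmin_le _ h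
          apply (mem_TSet Γ).mpr
          refine Or.inr ⟨huinitx, ?_⟩
          intro c hc
          by_cases hcv : c = v
          · rw [hcv]; exact hadjvu.symm
          · exact hadj c (Finset.mem_erase.mpr ⟨hcv, hc⟩)
    have hvnot' : fmin (TSet Γ ⟨C.erase v, GraphMonoid.gen Γ v * x⟩) h'
        ∉ (⟨C.erase v, GraphMonoid.gen Γ v * x⟩ : Σ _ : Finset V, GraphMonoid Γ).1 := by
      rw [hmin']
      exact Finset.notMem_erase v C
    obtain ⟨z, hz, hgz⟩ := gmap_eq_insert Γ h' hvnot'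
    rw [hmin'] at hz hgz
    have hzx : z = x :=
      (gen_left_cancel Γ (show GraphMonoid.gen Γ v * x = GraphMonoid.gen Γ v * z from hz)).symm
    rw [hg1, hgz, hzx, Finset.insert_erase hv]
  · obtain ⟨z, hz, hgz⟩ := gmap_eq_insert Γ h hv
    rw [← hvdef] at hz hgz
    have hvinit : v ∈ initS Γ x ∧ ∀ c ∈ C, Γ.Adj v c :=
      ((mem_TSet Γ).mp hvmem).resolve_left hv
    have hvT' : v ∈ TSet Γ ⟨insert v C, z⟩ :=
      (mem_TSet Γ).mpr (Or.inl (Finset.mem_insert_self v C))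
    have h' : (TSet Γ ⟨insert v C, z⟩).Nonempty := ⟨v, hvT'⟩
    have hmin' : fmin (TSet Γ ⟨insert v C, z⟩) h' = v := by
      apply fmin_eq _ h' hvT'
      intro u hu
      rcases (mem_TSet Γ).mp hu with huC | ⟨huinit, hadj⟩
      · rcases Finset.mem_insert.mp huC with rfl | huC
        · exact le_rfl
        · exact fmin_le _ h ((mem_TSet Γ).mpr (Or.inl huC))
      · have hadjuv : Γ.Adj u v := hadj v (Finset.mem_insert_self v C)
        have huinitx : u ∈ initS Γ x := by
          have hz' : x = GraphMonoid.gen Γ v * z := hz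
          rw [hz']
          exact initS_mul_of_adj Γ hadjuv huinit
        apply fmin_le _ h
        exact (mem_TSet Γ).mpr
          (Or.inr ⟨huinitx, fun c hc => hadj c (Finset.mem_insert_of_mem hc)⟩)
    have hv' : fmin (TSet Γ ⟨insert v C, z⟩) h'
        ∈ (⟨insert v C, z⟩ : Σ _ : Finset V, GraphMonoid Γ).1 := by
      rw [hmin']
      exact Finset.mem_insert_self v C
    have hg2 := gmap_eq_erase Γ h' hv'
    rw [hmin'] at hg2
    rw [hgz, hg2, Finset.erase_insert hv, ← hz]

noncomputable def Tn (n : ℕ) : Finset (Σ _ : Finset V, GraphMonoid Γ) :=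
  (Finset.univ.filter fun C : Finset V => Γ.IsClique (↑C : Set V) ∧ C.card ≤ n).sigma
    (fun C => SF Γ (n - C.card))

theorem mem_Tn {n : ℕ} {p : Σ _ : Finset V, GraphMonoid Γ} :
    p ∈ Tn Γ n ↔ Γ.IsClique (↑p.1 : Set V) ∧ p.1.card ≤ n ∧ tlen Γ p.2 = n - p.1.card := by
  simp only [Tn, Finset.mem_sigma, Finset.mem_filter, Finset.mem_univ, true_and, mem_SF]
  tauto

theorem hp_of_mem {n : ℕ} (hn : 1 ≤ n) {p : Σ _ : Finset V, GraphMonoid Γ}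
    (hp : p ∈ Tn Γ n) : p.1.Nonempty ∨ p.2 ≠ 1 := by
  obtain ⟨_, hcard, hlen⟩ := (mem_Tn Γ).mp hp
  rcases Finset.eq_empty_or_nonempty p.1 with he | hne
  · right
    intro h1
    rw [h1, tlen_one, he, Finset.card_empty] at hlen
    omega
  · exact Or.inl hne

theorem gmap_mem {n : ℕ} (hn : 1 ≤ n) {p : Σ _ : Finset V, GraphMonoid Γ}
    (hp : p ∈ Tn Γ n) :
    gmap Γ p ∈ Tn Γ n ∧
      ((gmap Γ p).1.card = p.1.card + 1 ∨ p.1.card = (gmap Γ p).1.card + 1) := by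
  obtain ⟨C, x⟩ := p
  obtain ⟨hcl', hcard', hlen'⟩ := (mem_Tn Γ).mp hp
  have hcl : Γ.IsClique (↑C : Set V) := hcl'
  have hcard : C.card ≤ n := hcard'
  have hlen : tlen Γ x = n - C.card := hlen'
  have h : (TSet Γ ⟨C, x⟩).Nonempty := TSet_nonempty Γ (hp_of_mem Γ hn hp)
  set v := fmin (TSet Γ ⟨C, x⟩) h with hvdef
  have hvmem : v ∈ TSet Γ ⟨C, x⟩ := fmin_mem _ h
  by_cases hv : v ∈ C
  · rw [gmap_eq_erase Γ h hv, ← hvdef]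
    have hC1 : 1 ≤ C.card := Finset.card_pos.mpr ⟨v, hv⟩
    have hce : (C.erase v).card = C.card - 1 := Finset.card_erase_of_mem hv
    constructor
    · apply (mem_Tn Γ).mpr
      refine ⟨?_, ?_, ?_⟩
      · exact hcl.subset (Finset.coe_subset.mpr (Finset.erase_subset v C))
      · simp only [hce]; omega
      · simp only [tlen_gen_mul, hce]
        omega
    · right
      simp only [hce]
      omega
  · obtain ⟨z, hz, hgz⟩ := gmap_eq_insert Γ h hv
    rw [← hvdef] at hz hgz
    rw [hgz]
    have hvinit : v ∈ initS Γ x ∧ ∀ c ∈ C, Γ.Adj v c :=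
      ((mem_TSet Γ).mp hvmem).resolve_left hv
    have hci : (insert v C).card = C.card + 1 := Finset.card_insert_of_notMem hv
    have hz' : x = GraphMonoid.gen Γ v * z := hz
    have hlz : tlen Γ x = tlen Γ z + 1 := by rw [hz', tlen_gen_mul]
    have hx1 : 1 ≤ tlen Γ x := by omega
    constructor
    · apply (mem_Tn Γ).mpr
      refine ⟨?_, ?_, ?_⟩
      · show Γ.IsClique (↑(insert v C) : Set V)
        rw [Finset.coe_insert]
        exact hcl.insert (fun b hb _ => hvinit.2 b (Finset.mem_coe.mp hb))
      · simp only [hci]; omega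
      · simp only [hci]; omega
    · left
      simp only [hci]

theorem key_sum {n : ℕ} (hn : 1 ≤ n) :
    ∑ p ∈ Tn Γ n, (-1 : ℚ) ^ p.1.card = 0 := by
  apply Finset.sum_involution (fun p _ => gmap Γ p)
  · intro p hp
    rcases (gmap_mem Γ hn hp).2 with hc | hc <;> rw [hc] <;> ring
  · intro p hp _
    intro heq
    have hfst : (gmap Γ p).1 = p.1 := congrArg Sigma.fst heq
    rcases (gmap_mem Γ hn hp).2 with hc | hc <;> rw [hfst] at hc <;> omega
  · intro p hp
    exact (gmap_mem Γ hn hp).1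
  · intro p hp
    exact gmap_gmap Γ ((mem_Tn Γ).mp hp).1 (hp_of_mem Γ hn hp)

end Involution


section CliquePolyLemmas

variable (Γ) [Fintype V]

theorem cliqueFinset_zero_card : (Γ.cliqueFinset 0).card = 1 := by
  have h : Γ.cliqueFinset 0 = {∅} := by
    ext s
    simp only [SimpleGraph.mem_cliqueFinset_iff, SimpleGraph.isNClique_iff,
      Finset.card_eq_zero, Finset.mem_singleton]
    constructor
    · rintro ⟨_, rfl⟩; rfl
    · rintro rfl
      exact ⟨by simp, rfl⟩
  rw [h, Finset.card_singleton]

theorem cliqueFinset_eq_empty_of_big {k : ℕ} (hk : Fintype.card V < k) :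
    Γ.cliqueFinset k = ∅ := by
  ext s
  simp only [SimpleGraph.mem_cliqueFinset_iff, Finset.notMem_empty, iff_false]
  intro h
  have h1 : s.card = k := h.2
  have h2 : s.card ≤ Fintype.card V := Finset.card_le_univ s |>.trans (le_of_eq (Finset.card_univ))
  omega

theorem coeff_phi (m : ℕ) :
    PowerSeries.coeff m (Polynomial.aeval (-(PowerSeries.X : PowerSeries ℚ)) (cliquePoly Γ))
      = (-1 : ℚ) ^ m * ((Γ.cliqueFinset m).card : ℚ) := by
  have hX : (-(PowerSeries.X : PowerSeries ℚ)) = (-1 : ℚ) • PowerSeries.X := by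
    rw [neg_smul, one_smul]
  rw [cliquePoly]
  simp only [map_sum]
  have hterm : ∀ k ∈ Finset.range (Fintype.card V + 1),
      PowerSeries.coeff m (Polynomial.aeval (-(PowerSeries.X : PowerSeries ℚ))
        (((Γ.cliqueFinset k).card : ℚ) • Polynomial.X ^ k : Polynomial ℚ))
      = if k = m then (-1 : ℚ) ^ m * ((Γ.cliqueFinset m).card : ℚ) else 0 := by
    intro k _
    rw [Polynomial.smul_eq_C_mul, map_mul, Polynomial.aeval_C, map_pow, Polynomial.aeval_X,
      PowerSeries.algebraMap_apply, Algebra.algebraMap_self, RingHom.id_apply, hX, smul_pow,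
      mul_smul_comm, map_smul, PowerSeries.coeff_C_mul, PowerSeries.coeff_X_pow, smul_eq_mul]
    by_cases hkm : k = m
    · subst hkm
      simp [mul_comm]
    · simp [hkm, Ne.symm hkm]
  rw [Finset.sum_congr rfl hterm, Finset.sum_ite_eq' (Finset.range _) m
    (fun _ => (-1 : ℚ) ^ m * ((Γ.cliqueFinset m).card : ℚ))]
  by_cases hm : m ∈ Finset.range (Fintype.card V + 1)
  · rw [if_pos hm]
  · rw [if_neg hm]
    have hbig : Fintype.card V < m := by
      by_contra hc
      exact hm (Finset.mem_range.mpr (by omega))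
    rw [cliqueFinset_eq_empty_of_big Γ hbig]
    simp

end CliquePolyLemmas

end CFProof

theorem graph_monoid_growth_clique_poly {V : Type*} [Fintype V] (Γ : SimpleGraph V) :
    PowerSeries.mk (fun n => (Nat.card {x : GraphMonoid Γ // mlen (GraphMonoid.gen Γ) x = n} : ℚ)) =
      (Polynomial.aeval (-(PowerSeries.X : PowerSeries ℚ)) (cliquePoly Γ))⁻¹ := by
  have hconst : PowerSeries.constantCoeff
      (Polynomial.aeval (-(PowerSeries.X : PowerSeries ℚ)) (cliquePoly Γ)) = 1 := by
    rw [← PowerSeries.coeff_zero_eq_constantCoeff_apply, CFProof.coeff_phi,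
      CFProof.cliqueFinset_zero_card]
    simp
  rw [PowerSeries.eq_inv_iff_mul_eq_one (by rw [hconst]; exact one_ne_zero)]
  ext n
  rw [PowerSeries.coeff_mul, PowerSeries.coeff_one]
  have hterm : ∀ pq ∈ Finset.HasAntidiagonal.antidiagonal n,
      (PowerSeries.coeff pq.1) (PowerSeries.mk fun k =>
        (Nat.card {x : GraphMonoid Γ // mlen (GraphMonoid.gen Γ) x = k} : ℚ)) *
        PowerSeries.coeff pq.2
          (Polynomial.aeval (-(PowerSeries.X : PowerSeries ℚ)) (cliquePoly Γ))
      = ((CFProof.SF Γ pq.1).card : ℚ) *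
        ((-1 : ℚ) ^ pq.2 * ((Γ.cliqueFinset pq.2).card : ℚ)) := by
    intro pq _
    rw [PowerSeries.coeff_mk, CFProof.card_len, CFProof.coeff_phi]
  rw [Finset.sum_congr rfl hterm]
  rcases Nat.eq_zero_or_pos n with rfl | hn
  · rw [Finset.Nat.antidiagonal_zero, if_pos rfl, Finset.sum_singleton]
    show ((CFProof.SF Γ 0).card : ℚ) * ((-1 : ℚ) ^ 0 * ((Γ.cliqueFinset 0).card : ℚ)) = 1
    rw [CFProof.SF_zero, CFProof.cliqueFinset_zero_card]
    norm_num
  · rw [if_neg (by omega)]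
    rw [Finset.Nat.sum_antidiagonal_eq_sum_range_succ_mk]
    -- goal : ∑ k in range (n+1), SF k * ((-1)^(n-k) * c (n-k)) = 0
    rw [← Finset.sum_range_reflect]
    have hre : ∀ j ∈ Finset.range (n + 1),
        ((CFProof.SF Γ (n + 1 - 1 - j)).card : ℚ) *
          ((-1 : ℚ) ^ (n - (n + 1 - 1 - j)) *
            ((Γ.cliqueFinset (n - (n + 1 - 1 - j))).card : ℚ))
        = ((CFProof.SF Γ (n - j)).card : ℚ) *
          ((-1 : ℚ) ^ j * ((Γ.cliqueFinset j).card : ℚ)) := by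
      intro j hj
      have hj' : j ≤ n := Nat.lt_succ_iff.mp (Finset.mem_range.mp hj)
      have h1 : n + 1 - 1 - j = n - j := by omega
      have h2 : n - (n - j) = j := by omega
      rw [h1, h2]
    rw [Finset.sum_congr rfl hre]
    -- now use key_sum
    have hkey := CFProof.key_sum Γ (n := n) hn
    rw [CFProof.Tn, Finset.sum_sigma] at hkey
    have h2 : ∀ C ∈ (Finset.univ.filter fun C : Finset V =>
        Γ.IsClique (↑C : Set V) ∧ C.card ≤ n),
        (∑ x ∈ CFProof.SF Γ (n - C.card),
          ((-1 : ℚ)) ^ ((⟨C, x⟩ : Σ _ : Finset V, GraphMonoid Γ).1.card))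
        = ((CFProof.SF Γ (n - C.card)).card : ℚ) * (-1 : ℚ) ^ C.card := by
      intro C _
      have hconst2 : (∑ x ∈ CFProof.SF Γ (n - C.card),
            ((-1 : ℚ)) ^ ((⟨C, x⟩ : Σ _ : Finset V, GraphMonoid Γ).1.card))
          = ∑ _x ∈ CFProof.SF Γ (n - C.card), ((-1 : ℚ)) ^ C.card :=
        Finset.sum_congr rfl (fun x _ => rfl)
      rw [hconst2, Finset.sum_const, nsmul_eq_mul]
    rw [Finset.sum_congr rfl h2] at hkey
    have hmaps : ∀ C ∈ (Finset.univ.filter fun C : Finset V =>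
        Γ.IsClique (↑C : Set V) ∧ C.card ≤ n), C.card ∈ Finset.range (n + 1) :=
      fun C hC => Finset.mem_range.mpr (Nat.lt_succ_of_le (Finset.mem_filter.mp hC).2.2)
    rw [← Finset.sum_fiberwise_of_maps_to hmaps
      (fun C => ((CFProof.SF Γ (n - C.card)).card : ℚ) * (-1 : ℚ) ^ C.card)] at hkey
    have h4 : ∀ j ∈ Finset.range (n + 1),
        (∑ C ∈ (Finset.univ.filter fun C : Finset V =>
            Γ.IsClique (↑C : Set V) ∧ C.card ≤ n).filter (fun C => C.card = j),
          ((CFProof.SF Γ (n - C.card)).card : ℚ) * (-1 : ℚ) ^ C.card)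
        = ((CFProof.SF Γ (n - j)).card : ℚ) *
          ((-1 : ℚ) ^ j * ((Γ.cliqueFinset j).card : ℚ)) := by
      intro j hj
      have hj' : j ≤ n := Nat.lt_succ_iff.mp (Finset.mem_range.mp hj)
      have hje : ((Finset.univ.filter fun C : Finset V =>
          Γ.IsClique (↑C : Set V) ∧ C.card ≤ n).filter (fun C => C.card = j))
          = Γ.cliqueFinset j := by
        ext C
        simp only [Finset.mem_filter, Finset.mem_univ, true_and,
          SimpleGraph.mem_cliqueFinset_iff, SimpleGraph.isNClique_iff]
        constructor
        · rintro ⟨⟨hc1, _⟩, hc3⟩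
          exact ⟨hc1, hc3⟩
        · rintro ⟨hc1, hc2⟩
          exact ⟨⟨hc1, hc2 ▸ hj'⟩, hc2⟩
      rw [hje]
      have h5 : ∀ C ∈ Γ.cliqueFinset j,
          ((CFProof.SF Γ (n - C.card)).card : ℚ) * (-1 : ℚ) ^ C.card
          = ((CFProof.SF Γ (n - j)).card : ℚ) * (-1 : ℚ) ^ j := by
        intro C hC
        rw [(SimpleGraph.mem_cliqueFinset_iff.mp hC).2]
      rw [Finset.sum_congr rfl h5, Finset.sum_const, nsmul_eq_mul]
      ring
    rw [Finset.sum_congr rfl h4] at hkey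
    exact hkey
end

section
/- The spherical growth series of the right-angled Coxeter group W(Γ) equals 1/p_Γ(-t/(1+t)), where p_Γ is the clique polynomial of Γ. -/
open scoped Classical

variable {V : Type*} {M : Type*} {G : Type*}

namespace RacgNF

variable {V : Type*} (Γ : SimpleGraph V)

/-- One commutation swap of adjacent letters. -/
def SwapRel (w w' : List V) : Prop :=
  ∃ a x y b, Γ.Adj x y ∧ w = a ++ x :: y :: b ∧ w' = a ++ y :: x :: b

abbrev Star : List V → List V → Prop := Relation.EqvGen (SwapRel Γ)

/-- `i` is "frontable": it occurs, and its first occurrence is preceded only by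
neighbours of `i`. -/
def ft (i : V) : List V → Prop
  | [] => False
  | j :: w => i = j ∨ (Γ.Adj i j ∧ ft i w)

/-- Delete the first occurrence of `i`. -/
noncomputable def delFt (i : V) : List V → List V
  | [] => []
  | j :: w => if i = j then w else j :: delFt i w

/-- Reduced word: no letter can be cancelled against a later equal letter. -/
def Red : List V → Prop
  | [] => True
  | j :: w => ¬ ft Γ j w ∧ Red w

variable {Γ}

lemma swapRel_symm {w w' : List V} (h : SwapRel Γ w w') : SwapRel Γ w' w := by
  obtain ⟨a, x, y, b, hadj, rfl, rfl⟩ := h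
  exact ⟨a, y, x, b, hadj.symm, rfl, rfl⟩

lemma star_cons (c : V) {w w' : List V} (h : Star Γ w w') : Star Γ (c :: w) (c :: w') := by
  induction h with
  | rel x y hxy =>
      obtain ⟨a, x, y, b, hadj, rfl, rfl⟩ := hxy
      exact Relation.EqvGen.rel _ _ ⟨c :: a, x, y, b, hadj, rfl, rfl⟩
  | refl x => exact Relation.EqvGen.refl _
  | symm x y _ ih => exact ih.symm
  | trans x y z _ _ ih₁ ih₂ => exact ih₁.trans _ _ _ ih₂

lemma star_swap {x y : V} (h : Γ.Adj x y) (b : List V) :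
    Star Γ (x :: y :: b) (y :: x :: b) :=
  Relation.EqvGen.rel _ _ ⟨[], x, y, b, h, rfl, rfl⟩

lemma length_swap {w w' : List V} (h : SwapRel Γ w w') : w.length = w'.length := by
  obtain ⟨a, x, y, b, _, rfl, rfl⟩ := h; simp

lemma length_star {w w' : List V} (h : Star Γ w w') : w.length = w'.length := by
  induction h with
  | rel x y hxy => exact length_swap hxy
  | refl x => rfl
  | symm x y _ ih => exact ih.symm
  | trans x y z _ _ ih₁ ih₂ => exact ih₁.trans ih₂

lemma ft_swap_aux {i x y : V} (h : Γ.Adj x y) : ∀ (a b : List V),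
    ft Γ i (a ++ x :: y :: b) ↔ ft Γ i (a ++ y :: x :: b) := by
  intro a b
  induction a with
  | nil =>
      simp only [List.nil_append, ft]
      constructor
      · rintro (rfl | ⟨h1, (rfl | ⟨h2, h3⟩)⟩)
        · exact Or.inr ⟨h, Or.inl rfl⟩
        · exact Or.inl rfl
        · exact Or.inr ⟨h2, Or.inr ⟨h1, h3⟩⟩
      · rintro (rfl | ⟨h1, (rfl | ⟨h2, h3⟩)⟩)
        · exact Or.inr ⟨h.symm, Or.inl rfl⟩
        · exact Or.inl rfl
        · exact Or.inr ⟨h2, Or.inr ⟨h1, h3⟩⟩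
  | cons c a ih =>
      simp only [List.cons_append, ft, List.append_eq]
      rw [ih]

lemma ft_swap {i : V} {w w' : List V} (h : SwapRel Γ w w') : ft Γ i w ↔ ft Γ i w' := by
  obtain ⟨a, x, y, b, hadj, rfl, rfl⟩ := h
  exact ft_swap_aux hadj a b

lemma ft_star {i : V} {w w' : List V} (h : Star Γ w w') : ft Γ i w ↔ ft Γ i w' := by
  induction h with
  | rel x y hxy => exact ft_swap hxy
  | refl x => exact Iff.rfl
  | symm x y _ ih => exact ih.symm
  | trans x y z _ _ ih₁ ih₂ => exact ih₁.trans ih₂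

lemma red_swap_aux {x y : V} (h : Γ.Adj x y) : ∀ (a b : List V),
    Red Γ (a ++ x :: y :: b) ↔ Red Γ (a ++ y :: x :: b) := by
  intro a b
  induction a with
  | nil =>
      simp only [List.nil_append, Red, ft]
      have hxy : x ≠ y := h.ne
      constructor
      · rintro ⟨h1, h2, h3⟩
        have h1' : ¬ ft Γ x b := fun h4 => h1 (Or.inr ⟨h, h4⟩)
        exact ⟨fun h5 => h5.elim (fun e => hxy e.symm) (fun ⟨_, h6⟩ => h2 h6), h1', h3⟩
      · rintro ⟨h1, h2, h3⟩
        have h1' : ¬ ft Γ y b := fun h4 => h1 (Or.inr ⟨h.symm, h4⟩)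
        exact ⟨fun h5 => h5.elim (fun e => hxy e) (fun ⟨_, h6⟩ => h2 h6), h1', h3⟩
  | cons c a ih =>
      simp only [List.cons_append, Red, List.append_eq]
      rw [ih, ft_swap_aux h]

lemma red_star {w w' : List V} (h : Star Γ w w') : Red Γ w ↔ Red Γ w' := by
  induction h with
  | rel x y hxy =>
      obtain ⟨a, x, y, b, hadj, rfl, rfl⟩ := hxy
      exact red_swap_aux hadj a b
  | refl x => exact Iff.rfl
  | symm x y _ ih => exact ih.symm
  | trans x y z _ _ ih₁ ih₂ => exact ih₁.trans ih₂


lemma star_refl (w : List V) : Star Γ w w := Relation.EqvGen.refl w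

lemma delFt_append_of_mem {i : V} : ∀ {a : List V} (c : List V), i ∈ a →
    delFt i (a ++ c) = delFt i a ++ c := by
  intro a
  induction a with
  | nil => intro c h; simp at h
  | cons j a ih =>
      intro c h
      by_cases hij : i = j
      · simp [delFt, hij]
      · have : i ∈ a := by
          rcases List.mem_cons.1 h with h' | h'
          · exact absurd h' hij
          · exact h'
        simp [delFt, hij, ih c this]

lemma delFt_append_of_not_mem {i : V} : ∀ {a : List V} (c : List V), i ∉ a →
    delFt i (a ++ c) = a ++ delFt i c := by
  intro a
  induction a with
  | nil => intro c _; simp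
  | cons j a ih =>
      intro c h
      have hij : i ≠ j := fun e => h (e ▸ List.mem_cons_self)
      have hia : i ∉ a := fun e => h (List.mem_cons_of_mem _ e)
      simp [delFt, hij, ih c hia]

lemma delFt_swap {i : V} {w w' : List V} (h : SwapRel Γ w w') :
    Star Γ (delFt i w) (delFt i w') := by
  obtain ⟨a, x, y, b, hadj, rfl, rfl⟩ := h
  by_cases hia : i ∈ a
  · rw [delFt_append_of_mem _ hia, delFt_append_of_mem _ hia]
    exact Relation.EqvGen.rel _ _ ⟨delFt i a, x, y, b, hadj, rfl, rfl⟩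
  · rw [delFt_append_of_not_mem _ hia, delFt_append_of_not_mem _ hia]
    by_cases hix : i = x
    · subst hix
      have hiy : i ≠ y := hadj.ne
      simp [delFt, hiy]
      exact star_refl _
    · by_cases hiy : i = y
      · subst hiy
        simp [delFt, hix]
        exact star_refl _
      · simp [delFt, hix, hiy]
        refine Relation.EqvGen.rel _ _ ⟨a, x, y, delFt i b, hadj, rfl, rfl⟩

lemma delFt_star {i : V} {w w' : List V} (h : Star Γ w w') :
    Star Γ (delFt i w) (delFt i w') := by
  induction h with
  | rel x y hxy => exact delFt_swap hxy
  | refl x => exact star_refl _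
  | symm x y _ ih => exact ih.symm
  | trans x y z _ _ ih₁ ih₂ => exact ih₁.trans _ _ _ ih₂

lemma cons_delFt_star {i : V} : ∀ {w : List V}, ft Γ i w →
    Star Γ (i :: delFt i w) w := by
  intro w
  induction w with
  | nil => intro h; exact absurd h (by simp [ft])
  | cons j w ih =>
      intro h
      by_cases hij : i = j
      · subst hij; simp [delFt]; exact star_refl _
      · rcases h with h | ⟨hadj, hft⟩
        · exact absurd h hij
        · simp only [delFt, hij, if_neg]
          exact (star_swap hadj _).trans _ _ _ (star_cons j (ih hft))

lemma ft_delFt_iff {i j : V} (hadj : Γ.Adj j i) : ∀ {w : List V},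
    ft Γ j (delFt i w) ↔ ft Γ j w := by
  have hji : j ≠ i := hadj.ne
  intro w
  induction w with
  | nil => simp [delFt]
  | cons k w ih =>
      by_cases hik : i = k
      · subst hik
        simp only [delFt, if_pos rfl, ft]
        constructor
        · intro h; exact Or.inr ⟨hadj, h⟩
        · rintro (h | ⟨_, h⟩)
          · exact absurd h hji
          · exact h
      · simp only [delFt, if_neg hik, ft]
        rw [ih]

lemma not_ft_delFt {i : V} : ∀ {w : List V}, Red Γ w → ft Γ i w →
    ¬ ft Γ i (delFt i w) := by
  intro w
  induction w with
  | nil => intro _ h; exact absurd h (by simp [ft])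
  | cons j w ih =>
      rintro ⟨hj, hw⟩ h
      by_cases hij : i = j
      · subst hij; simpa [delFt] using hj
      · rcases h with h | ⟨hadj, hft⟩
        · exact absurd h hij
        · simp only [delFt, if_neg hij, ft]
          rintro (h | ⟨_, h⟩)
          · exact hij h
          · exact ih hw hft h

lemma red_delFt {i : V} : ∀ {w : List V}, Red Γ w → ft Γ i w →
    Red Γ (delFt i w) := by
  intro w
  induction w with
  | nil => intro _ h; exact absurd h (by simp [ft])
  | cons j w ih =>
      rintro ⟨hj, hw⟩ h
      by_cases hij : i = j
      · subst hij; simpa [delFt] using hw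
      · rcases h with h | ⟨hadj, hft⟩
        · exact absurd h hij
        · simp only [delFt, if_neg hij, Red]
          refine ⟨fun hc => hj ?_, ih hw hft⟩
          have : Γ.Adj j i := hadj.symm
          exact (ft_delFt_iff this).1 hc

lemma delFt_comm {i j : V} (hij : i ≠ j) : ∀ (w : List V),
    delFt i (delFt j w) = delFt j (delFt i w) := by
  intro w
  induction w with
  | nil => simp [delFt]
  | cons k w ih =>
      by_cases hik : i = k
      · subst hik
        simp [delFt, hij, Ne.symm hij, ih]
      · by_cases hjk : j = k
        · subst hjk
          simp [delFt, hik, hij]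
        · simp [delFt, hik, hjk, ih]

lemma ft_adj_or_eq {i j : V} : ∀ {w : List V}, ft Γ i w → ft Γ j w →
    i = j ∨ Γ.Adj i j := by
  intro w
  induction w with
  | nil => intro h; exact absurd h (by simp [ft])
  | cons k w ih =>
      rintro (rfl | ⟨hadj, hft⟩) (rfl | ⟨hadj', hft'⟩)
      · exact Or.inl rfl
      · exact Or.inr hadj'.symm
      · exact Or.inr hadj
      · exact ih hft hft'

lemma mem_of_ft {i : V} : ∀ {w : List V}, ft Γ i w → i ∈ w := by
  intro w
  induction w with
  | nil => intro h; exact absurd h (by simp [ft])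
  | cons j w ih =>
      rintro (rfl | ⟨_, h⟩)
      · exact List.mem_cons_self
      · exact List.mem_cons_of_mem _ (ih h)

lemma delFt_length {i : V} : ∀ {w : List V}, i ∈ w →
    (delFt i w).length + 1 = w.length := by
  intro w
  induction w with
  | nil => simp
  | cons j w ih =>
      intro h
      by_cases hij : i = j
      · simp [delFt, hij]
      · have : i ∈ w := by
          rcases List.mem_cons.1 h with h' | h'
          · exact absurd h' hij
          · exact h'
        simp only [delFt, if_neg hij, List.length_cons]
        rw [← ih this]


/-! ### Quotient by commutation -/

variable (Γ)

def swapSetoid : Setoid (List V) := Relation.EqvGen.setoid (SwapRel Γ)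

def QW := Quotient (swapSetoid Γ)

def qmk (w : List V) : QW Γ := Quotient.mk (swapSetoid Γ) w

lemma qmk_eq {w w' : List V} (h : Star Γ w w') : qmk Γ w = qmk Γ w' :=
  Quotient.sound h

lemma qmk_exact {w w' : List V} (h : qmk Γ w = qmk Γ w') : Star Γ w w' :=
  Quotient.exact h

noncomputable def qlen : QW Γ → ℕ :=
  Quotient.lift List.length (fun _ _ h => length_star h)

def qft (i : V) : QW Γ → Prop :=
  Quotient.lift (ft Γ i) (fun _ _ h => propext (ft_star h))

def qred : QW Γ → Prop :=
  Quotient.lift (Red Γ) (fun _ _ h => propext (red_star h))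

noncomputable def sigw (i : V) (w : List V) : QW Γ :=
  if ft Γ i w then qmk Γ (delFt i w) else qmk Γ (i :: w)

lemma sigw_respects (i : V) {w w' : List V} (h : Star Γ w w') :
    sigw Γ i w = sigw Γ i w' := by
  by_cases hf : ft Γ i w
  · have hf' : ft Γ i w' := (ft_star h).1 hf
    simp only [sigw, if_pos hf, if_pos hf']
    exact qmk_eq Γ (delFt_star h)
  · have hf' : ¬ ft Γ i w' := fun hc => hf ((ft_star h).2 hc)
    simp only [sigw, if_neg hf, if_neg hf']
    exact qmk_eq Γ (star_cons i h)

noncomputable def sig (i : V) : QW Γ → QW Γ :=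
  Quotient.lift (sigw Γ i) (fun _ _ h => sigw_respects Γ i h)

variable {Γ}

@[elab_as_elim] lemma qw_ind {motive : QW Γ → Prop} (h : ∀ w, motive (qmk Γ w)) (q : QW Γ) :
    motive q := Quotient.inductionOn q h

@[simp] lemma qlen_qmk (w : List V) : qlen Γ (qmk Γ w) = w.length := rfl
@[simp] lemma qft_qmk (i : V) (w : List V) : qft Γ i (qmk Γ w) = ft Γ i w := rfl
@[simp] lemma qred_qmk (w : List V) : qred Γ (qmk Γ w) = Red Γ w := rfl
@[simp] lemma sig_qmk (i : V) (w : List V) : sig Γ i (qmk Γ w) = sigw Γ i w := rfl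

lemma qred_sig (i : V) {q : QW Γ} (hq : qred Γ q) : qred Γ (sig Γ i q) := by
  induction q using qw_ind with
  | h w =>
    by_cases hf : ft Γ i w
    · simp only [sig_qmk, sigw, if_pos hf, qred_qmk]
      exact red_delFt hq hf
    · simp only [sig_qmk, sigw, if_neg hf, qred_qmk]
      exact ⟨hf, hq⟩

lemma qlen_sig_of_ft (i : V) {q : QW Γ} (hf : qft Γ i q) :
    qlen Γ (sig Γ i q) + 1 = qlen Γ q := by
  induction q using qw_ind with
  | h w =>
    simp only [sig_qmk, sigw, if_pos (show ft Γ i w from hf), qlen_qmk]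
    exact delFt_length (mem_of_ft hf)

lemma qlen_sig_of_not_ft (i : V) {q : QW Γ} (hf : ¬ qft Γ i q) :
    qlen Γ (sig Γ i q) = qlen Γ q + 1 := by
  induction q using qw_ind with
  | h w =>
    simp only [sig_qmk, sigw, if_neg (show ¬ ft Γ i w from hf), qlen_qmk]
    rfl

lemma sig_sig (i : V) {q : QW Γ} (hq : qred Γ q) : sig Γ i (sig Γ i q) = q := by
  induction q using qw_ind with
  | h w =>
    by_cases hf : ft Γ i w
    · simp only [sig_qmk, sigw, if_pos hf]
      have h2 : ¬ ft Γ i (delFt i w) := not_ft_delFt hq hf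
      simp only [sig_qmk, sigw, if_neg h2]
      exact qmk_eq Γ (cons_delFt_star hf)
    · simp only [sig_qmk, sigw, if_neg hf]
      have h2 : ft Γ i (i :: w) := Or.inl rfl
      simp only [sig_qmk, sigw, if_pos h2, delFt, if_pos rfl, if_true]

lemma qft_sig_of_not_ft {i : V} {q : QW Γ} (hf : ¬ qft Γ i q) (j : V) :
    qft Γ j (sig Γ i q) ↔ j = i ∨ (Γ.Adj j i ∧ qft Γ j q) := by
  induction q using qw_ind with
  | h w =>
    simp only [sig_qmk, sigw, if_neg (show ¬ ft Γ i w from hf), qft_qmk]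
    exact Iff.rfl

lemma qft_sig_of_ft {i j : V} {q : QW Γ} (hf : qft Γ i q) (hadj : Γ.Adj j i) :
    qft Γ j (sig Γ i q) ↔ qft Γ j q := by
  induction q using qw_ind with
  | h w =>
    simp only [sig_qmk, sigw, if_pos (show ft Γ i w from hf), qft_qmk]
    exact ft_delFt_iff hadj

lemma qft_sig_self {i : V} {q : QW Γ} (hq : qred Γ q) (hf : qft Γ i q) :
    ¬ qft Γ i (sig Γ i q) := by
  induction q using qw_ind with
  | h w =>
    simp only [sig_qmk, sigw, if_pos (show ft Γ i w from hf), qft_qmk]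
    exact not_ft_delFt hq hf

lemma sig_comm {i j : V} (hadj : Γ.Adj i j) (q : QW Γ) :
    sig Γ i (sig Γ j q) = sig Γ j (sig Γ i q) := by
  have hij : i ≠ j := hadj.ne
  induction q using qw_ind with
  | h w =>
    by_cases hfi : ft Γ i w <;> by_cases hfj : ft Γ j w
    · -- both frontable
      simp only [sig_qmk, sigw, if_pos hfi, if_pos hfj]
      have h1 : ft Γ i (delFt j w) := (ft_delFt_iff hadj).2 hfi
      have h2 : ft Γ j (delFt i w) := (ft_delFt_iff hadj.symm).2 hfj
      simp only [sig_qmk, sigw, if_pos h1, if_pos h2]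
      rw [delFt_comm hij]
    · -- i frontable, j not
      simp only [sig_qmk, sigw, if_pos hfi, if_neg hfj]
      have h1 : ft Γ i (j :: w) := Or.inr ⟨hadj, hfi⟩
      have h2 : ¬ ft Γ j (delFt i w) := fun hc => hfj ((ft_delFt_iff hadj.symm).1 hc)
      simp only [sig_qmk, sigw, if_pos h1, if_neg h2, delFt, if_neg hij]
    · -- j frontable, i not
      simp only [sig_qmk, sigw, if_neg hfi, if_pos hfj]
      have h1 : ft Γ j (i :: w) := Or.inr ⟨hadj.symm, hfj⟩
      have h2 : ¬ ft Γ i (delFt j w) := fun hc => hfi ((ft_delFt_iff hadj).1 hc)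
      simp only [sig_qmk, sigw, if_pos h1, if_neg h2, delFt, if_neg (Ne.symm hij)]
    · -- neither
      have h1 : ¬ ft Γ i (j :: w) := by
        rintro (h | ⟨_, h⟩)
        · exact hij h
        · exact hfi h
      have h2 : ¬ ft Γ j (i :: w) := by
        rintro (h | ⟨_, h⟩)
        · exact hij h.symm
        · exact hfj h
      simp only [sig_qmk, sigw, if_neg hfi, if_neg hfj, if_neg h1, if_neg h2]
      exact qmk_eq Γ (star_swap hadj w)

lemma qft_adj_or_eq {i j : V} {q : QW Γ} (hi : qft Γ i q) (hj : qft Γ j q) :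
    i = j ∨ Γ.Adj i j := by
  induction q using qw_ind with
  | h w => exact ft_adj_or_eq hi hj

lemma qw_cases (q : QW Γ) : q = qmk Γ [] ∨ ∃ i, qft Γ i q := by
  induction q using qw_ind with
  | h w =>
    cases w with
    | nil => exact Or.inl rfl
    | cons j w => exact Or.inr ⟨j, Or.inl rfl⟩

lemma qlen_zero_iff (q : QW Γ) : qlen Γ q = 0 ↔ q = qmk Γ [] := by
  induction q using qw_ind with
  | h w =>
    cases w with
    | nil => simp
    | cons j w =>
      simp only [qlen_qmk, List.length_cons]
      constructor
      · omega
      · intro h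
        have := length_star (qmk_exact Γ h)
        simp at this


/-! ### The group side -/

variable (Γ)

noncomputable def prodW (w : List V) : RACG Γ := (w.map (RACG.gen Γ)).prod

@[simp] lemma prodW_nil : prodW Γ [] = 1 := rfl

@[simp] lemma prodW_cons (i : V) (w : List V) :
    prodW Γ (i :: w) = RACG.gen Γ i * prodW Γ w := by
  simp [prodW]

lemma prodW_append (w w' : List V) :
    prodW Γ (w ++ w') = prodW Γ w * prodW Γ w' := by
  simp [prodW]

lemma gen_mul_self (i : V) : RACG.gen Γ i * RACG.gen Γ i = 1 := by
  have hr : (FreeGroup.of i * FreeGroup.of i : FreeGroup V) ∈ racgRels Γ :=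
    Set.mem_union_right _ ⟨i, rfl⟩
  have : PresentedGroup.mk (racgRels Γ) (FreeGroup.of i * FreeGroup.of i) = 1 :=
    (QuotientGroup.eq_one_iff _).2 (Subgroup.subset_normalClosure hr)
  rw [map_mul] at this
  exact this

lemma gen_inv (i : V) : (RACG.gen Γ i)⁻¹ = RACG.gen Γ i :=
  inv_eq_of_mul_eq_one_right (gen_mul_self Γ i)

open commutatorElement in
lemma gen_comm {i j : V} (h : Γ.Adj i j) :
    RACG.gen Γ i * RACG.gen Γ j = RACG.gen Γ j * RACG.gen Γ i := by
  have hr : (FreeGroup.of i * FreeGroup.of j * (FreeGroup.of i)⁻¹ * (FreeGroup.of j)⁻¹ :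
      FreeGroup V) ∈ racgRels Γ :=
    Set.mem_union_left _ ⟨i, j, h, rfl⟩
  have h1 : PresentedGroup.mk (racgRels Γ)
      (FreeGroup.of i * FreeGroup.of j * (FreeGroup.of i)⁻¹ * (FreeGroup.of j)⁻¹) = 1 :=
    (QuotientGroup.eq_one_iff _).2 (Subgroup.subset_normalClosure hr)
  have h2 : ⁅RACG.gen Γ i, RACG.gen Γ j⁆ = 1 := by
    rw [map_mul, map_mul, map_mul, map_inv, map_inv] at h1
    exact h1
  exact commutatorElement_eq_one_iff_mul_comm.1 h2

variable {Γ}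

lemma prodW_swap {w w' : List V} (h : SwapRel Γ w w') : prodW Γ w = prodW Γ w' := by
  obtain ⟨a, x, y, b, hadj, rfl, rfl⟩ := h
  simp only [prodW_append, prodW_cons, prodW_append]
  rw [← mul_assoc (RACG.gen Γ x), gen_comm Γ hadj, mul_assoc]

lemma prodW_star {w w' : List V} (h : Star Γ w w') : prodW Γ w = prodW Γ w' := by
  induction h with
  | rel x y hxy => exact prodW_swap hxy
  | refl x => rfl
  | symm x y _ ih => exact ih.symm
  | trans x y z _ _ ih₁ ih₂ => exact ih₁.trans ih₂

variable (Γ)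

noncomputable def pq : QW Γ → RACG Γ :=
  Quotient.lift (prodW Γ) (fun _ _ h => prodW_star h)

@[simp] lemma pq_qmk (w : List V) : pq Γ (qmk Γ w) = prodW Γ w := rfl

variable {Γ}

lemma prodW_delFt {i : V} : ∀ {w : List V}, ft Γ i w →
    prodW Γ w = RACG.gen Γ i * prodW Γ (delFt i w) := by
  intro w
  induction w with
  | nil => intro h; exact absurd h (by simp [ft])
  | cons j w ih =>
      rintro (rfl | ⟨hadj, hft⟩)
      · simp [delFt]
      · have hij : i ≠ j := hadj.ne
        simp only [delFt, if_neg hij, prodW_cons]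
        rw [ih hft, ← mul_assoc, ← gen_comm Γ hadj, mul_assoc]

lemma pq_sig (i : V) (q : QW Γ) : pq Γ (sig Γ i q) = RACG.gen Γ i * pq Γ q := by
  induction q using qw_ind with
  | h w =>
    by_cases hf : ft Γ i w
    · simp only [sig_qmk, sigw, if_pos hf, pq_qmk]
      rw [prodW_delFt hf, ← mul_assoc, gen_mul_self, one_mul]
    · simp only [sig_qmk, sigw, if_neg hf, pq_qmk, prodW_cons]

/-! ### The permutation action -/

variable (Γ)

def NR := {q : QW Γ // qred Γ q}

noncomputable def sigPerm (i : V) : Equiv.Perm (NR Γ) where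
  toFun x := ⟨sig Γ i x.1, qred_sig i x.2⟩
  invFun x := ⟨sig Γ i x.1, qred_sig i x.2⟩
  left_inv x := Subtype.ext (sig_sig i x.2)
  right_inv x := Subtype.ext (sig_sig i x.2)

lemma sigPerm_apply (i : V) (x : NR Γ) :
    ((sigPerm Γ i) x).1 = sig Γ i x.1 := rfl

variable {Γ}

lemma racg_liftable : ∀ r ∈ racgRels Γ,
    FreeGroup.lift (fun i => (sigPerm Γ i : Equiv.Perm (NR Γ))) r = 1 := by
  rintro r (⟨i, j, hadj, rfl⟩ | ⟨i, rfl⟩)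
  · have hinv_i : (sigPerm Γ i)⁻¹ = sigPerm Γ i := rfl
    have hinv_j : (sigPerm Γ j)⁻¹ = sigPerm Γ j := rfl
    simp only [map_mul, map_inv, FreeGroup.lift_apply_of, hinv_i, hinv_j]
    ext x
    simp only [Equiv.Perm.coe_one, id_eq, Equiv.Perm.mul_apply]
    have hc : ∀ z : NR Γ, sigPerm Γ j ((sigPerm Γ i) z) = sigPerm Γ i ((sigPerm Γ j) z) :=
      fun z => Subtype.ext (sig_comm hadj.symm z.1)
    calc (sigPerm Γ i) ((sigPerm Γ j) ((sigPerm Γ i) ((sigPerm Γ j) x)))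
        = (sigPerm Γ i) ((sigPerm Γ i) ((sigPerm Γ j) ((sigPerm Γ j) x))) := by rw [hc]
      _ = x := by
          have h1 : (sigPerm Γ j) ((sigPerm Γ j) x) = x := Subtype.ext (sig_sig j x.2)
          rw [h1]
          exact Subtype.ext (sig_sig i x.2)
  · ext x
    simp only [map_mul, FreeGroup.lift_apply_of, Equiv.Perm.coe_one, id_eq, Equiv.Perm.mul_apply]
    exact Subtype.ext (sig_sig i x.2)

variable (Γ)

noncomputable def phi : RACG Γ →* Equiv.Perm (NR Γ) :=
  PresentedGroup.toGroup racg_liftable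

noncomputable def en : NR Γ := ⟨qmk Γ [], by simp [Red]⟩

noncomputable def nf (x : RACG Γ) : NR Γ := phi Γ x (en Γ)

variable {Γ}

lemma phi_gen (i : V) : phi Γ (RACG.gen Γ i) = sigPerm Γ i :=
  PresentedGroup.toGroup.of racg_liftable

lemma nf_one : nf Γ (1 : RACG Γ) = en Γ := by simp [nf]

lemma nf_gen_mul (i : V) (x : RACG Γ) :
    nf Γ (RACG.gen Γ i * x) = sigPerm Γ i (nf Γ x) := by
  simp [nf, map_mul, phi_gen]

lemma pq_nf_prodW : ∀ w : List V, pq Γ (nf Γ (prodW Γ w)).1 = prodW Γ w := by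
  intro w
  induction w with
  | nil => simp [nf_one, en]
  | cons i w ih =>
      rw [prodW_cons, nf_gen_mul]
      rw [sigPerm_apply, pq_sig, ih]

lemma exists_prodW (x : RACG Γ) : ∃ w : List V, prodW Γ w = x := by
  obtain ⟨z, rfl⟩ := PresentedGroup.mk_surjective (racgRels Γ) x
  induction z using FreeGroup.induction_on with
  | C1 => exact ⟨[], by simp⟩
  | of i => exact ⟨[i], by simp [prodW]; rfl⟩
  | inv_of i _ =>
      refine ⟨[i], ?_⟩
      rw [map_inv]
      show prodW Γ [i] = ((PresentedGroup.mk (racgRels Γ)) (FreeGroup.of i))⁻¹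
      have h0 : (PresentedGroup.mk (racgRels Γ)) (FreeGroup.of i) = RACG.gen Γ i := rfl
      rw [h0, gen_inv]
      simp [prodW]
  | mul a b ha hb =>
      obtain ⟨wa, hwa⟩ := ha
      obtain ⟨wb, hwb⟩ := hb
      exact ⟨wa ++ wb, by rw [prodW_append, hwa, hwb, map_mul]⟩

lemma pq_nf (x : RACG Γ) : pq Γ (nf Γ x).1 = x := by
  obtain ⟨w, rfl⟩ := exists_prodW x
  exact pq_nf_prodW w

lemma mlen_eq (x : RACG Γ) : mlen (RACG.gen Γ) x = qlen Γ (nf Γ x).1 := by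
  have hmem : qlen Γ (nf Γ x).1 ∈
      {n | ∃ w : List V, (w.map (RACG.gen Γ)).prod = x ∧ w.length = n} := by
    obtain ⟨w₀, hw₀⟩ := Quotient.exists_rep (nf Γ x).1
    refine ⟨w₀, ?_, ?_⟩
    · have : pq Γ (qmk Γ w₀) = prodW Γ w₀ := rfl
      have h2 : qmk Γ w₀ = (nf Γ x).1 := hw₀
      rw [← pq_nf x, ← h2]
      rfl
    · have h2 : qmk Γ w₀ = (nf Γ x).1 := hw₀
      rw [← h2]; rfl
  have hlb : ∀ w : List V, qlen Γ (nf Γ (prodW Γ w)).1 ≤ w.length := by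
    intro w
    induction w with
    | nil => simp [nf_one, en]
    | cons i w ih =>
        rw [prodW_cons, nf_gen_mul, sigPerm_apply]
        by_cases hf : qft Γ i (nf Γ (prodW Γ w)).1
        · have := qlen_sig_of_ft i hf
          simp only [List.length_cons]
          omega
        · have := qlen_sig_of_not_ft i hf
          simp only [List.length_cons]
          omega
  refine le_antisymm (Nat.sInf_le hmem) (le_csInf ⟨_, hmem⟩ ?_)
  rintro n ⟨w, hw, rfl⟩
  have : prodW Γ w = x := hw
  rw [← this]
  exact hlb w

/-! ### Descents -/

variable (Γ)

def des (x : RACG Γ) (i : V) : Prop := qft Γ i (nf Γ x).1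

variable {Γ}

lemma des_one (i : V) : ¬ des Γ (1 : RACG Γ) i := by
  simp only [des, nf_one, en]
  exact fun h => h.elim

lemma eq_one_of_not_des {x : RACG Γ} (h : ∀ i, ¬ des Γ x i) : x = 1 := by
  rcases qw_cases (nf Γ x).1 with h0 | ⟨i, hi⟩
  · have := pq_nf x
    rw [h0] at this
    simpa using this.symm
  · exact absurd hi (h i)

lemma mlen_one : mlen (RACG.gen Γ) (1 : RACG Γ) = 0 := by
  rw [mlen_eq, nf_one]
  rfl

lemma eq_one_of_mlen_zero {x : RACG Γ} (h : mlen (RACG.gen Γ) x = 0) : x = 1 := by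
  rw [mlen_eq] at h
  rw [qlen_zero_iff] at h
  have := pq_nf x
  rw [h] at this
  simpa using this.symm

lemma des_adj {x : RACG Γ} {i j : V} (hi : des Γ x i) (hj : des Γ x j) :
    i = j ∨ Γ.Adj i j := qft_adj_or_eq hi hj

lemma mlen_mul_of_des {x : RACG Γ} {i : V} (h : des Γ x i) :
    mlen (RACG.gen Γ) (RACG.gen Γ i * x) + 1 = mlen (RACG.gen Γ) x := by
  rw [mlen_eq, mlen_eq, nf_gen_mul, sigPerm_apply]
  exact qlen_sig_of_ft i h

lemma mlen_mul_of_not_des {x : RACG Γ} {i : V} (h : ¬ des Γ x i) :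
    mlen (RACG.gen Γ) (RACG.gen Γ i * x) = mlen (RACG.gen Γ) x + 1 := by
  rw [mlen_eq, mlen_eq, nf_gen_mul, sigPerm_apply]
  exact qlen_sig_of_not_ft i h

lemma des_mul_of_not_des {x : RACG Γ} {i : V} (h : ¬ des Γ x i) (j : V) :
    des Γ (RACG.gen Γ i * x) j ↔ j = i ∨ (Γ.Adj j i ∧ des Γ x j) := by
  unfold des
  rw [nf_gen_mul, sigPerm_apply]
  exact qft_sig_of_not_ft h j

lemma des_mul_of_des {x : RACG Γ} {i j : V} (h : des Γ x i) (hadj : Γ.Adj j i) :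
    des Γ (RACG.gen Γ i * x) j ↔ des Γ x j := by
  unfold des
  rw [nf_gen_mul, sigPerm_apply]
  exact qft_sig_of_ft h hadj

lemma des_mul_self {x : RACG Γ} {i : V} (h : des Γ x i) :
    ¬ des Γ (RACG.gen Γ i * x) i := by
  unfold des
  rw [nf_gen_mul, sigPerm_apply]
  exact qft_sig_self (nf Γ x).2 h

/-! ### Multiplying by a clique -/

lemma prodW_comm_of_adj {i : V} : ∀ {t : List V}, (∀ c ∈ t, Γ.Adj i c) →
    prodW Γ t * RACG.gen Γ i = RACG.gen Γ i * prodW Γ t := by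
  intro t
  induction t with
  | nil => simp
  | cons c t ih =>
      intro h
      have h1 : Γ.Adj i c := h c (List.mem_cons_self)
      have h2 := ih (fun d hd => h d (List.mem_cons_of_mem _ hd))
      rw [prodW_cons, mul_assoc, h2, ← mul_assoc, ← gen_comm Γ h1, mul_assoc]

lemma prodW_mul_self : ∀ {l : List V}, l.Nodup →
    (∀ a ∈ l, ∀ b ∈ l, a ≠ b → Γ.Adj a b) → prodW Γ l * prodW Γ l = 1 := by
  intro l
  induction l with
  | nil => simp
  | cons i t ih =>
      intro hnd hcl
      have hit : i ∉ t := (List.nodup_cons.1 hnd).1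
      have hadj : ∀ c ∈ t, Γ.Adj i c := fun c hc =>
        hcl i (List.mem_cons_self) c (List.mem_cons_of_mem _ hc)
          (fun e => hit (e ▸ hc))
      have ih' := ih (List.nodup_cons.1 hnd).2
        (fun a ha b hb hab => hcl a (List.mem_cons_of_mem _ ha) b (List.mem_cons_of_mem _ hb) hab)
      rw [prodW_cons]
      calc RACG.gen Γ i * prodW Γ t * (RACG.gen Γ i * prodW Γ t)
          = RACG.gen Γ i * (prodW Γ t * RACG.gen Γ i) * prodW Γ t := by
            rw [mul_assoc, mul_assoc, mul_assoc]
        _ = RACG.gen Γ i * (RACG.gen Γ i * prodW Γ t) * prodW Γ t := by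
            rw [prodW_comm_of_adj hadj]
        _ = (RACG.gen Γ i * RACG.gen Γ i) * (prodW Γ t * prodW Γ t) := by
            rw [← mul_assoc, mul_assoc]
        _ = 1 := by rw [gen_mul_self, ih', mul_one]

lemma clique_mul_not_des : ∀ (l : List V), l.Nodup →
    (∀ a ∈ l, ∀ b ∈ l, a ≠ b → Γ.Adj a b) →
    ∀ (x : RACG Γ), (∀ a ∈ l, ¬ des Γ x a) →
    mlen (RACG.gen Γ) (prodW Γ l * x) = mlen (RACG.gen Γ) x + l.length ∧
    ∀ j, des Γ (prodW Γ l * x) j ↔ j ∈ l ∨ (des Γ x j ∧ ∀ c ∈ l, Γ.Adj j c) := by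
  intro l
  induction l with
  | nil =>
      intro _ _ x _
      simp
  | cons i t ih =>
      intro hnd hcl x hd
      have hit : i ∉ t := (List.nodup_cons.1 hnd).1
      obtain ⟨ihlen, ihdes⟩ := ih (List.nodup_cons.1 hnd).2
        (fun a ha b hb hab => hcl a (List.mem_cons_of_mem _ ha) b (List.mem_cons_of_mem _ hb) hab)
        x (fun a ha => hd a (List.mem_cons_of_mem _ ha))
      set y := prodW Γ t * x with hy
      have hiy : ¬ des Γ y i := by
        rw [ihdes i]
        rintro (h | ⟨h, _⟩)
        · exact hit h
        · exact hd i (List.mem_cons_self) h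
      have heq : prodW Γ (i :: t) * x = RACG.gen Γ i * y := by
        rw [prodW_cons, mul_assoc]
      constructor
      · rw [heq, mlen_mul_of_not_des hiy, ihlen, List.length_cons]
        omega
      · intro j
        rw [heq, des_mul_of_not_des hiy j]
        constructor
        · rintro (rfl | ⟨hadj, hdy⟩)
          · exact Or.inl (List.mem_cons_self)
          · rw [ihdes j] at hdy
            rcases hdy with hjt | ⟨hjx, hall⟩
            · exact Or.inl (List.mem_cons_of_mem _ hjt)
            · refine Or.inr ⟨hjx, ?_⟩
              intro c hc
              rcases List.mem_cons.1 hc with rfl | hct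
              · exact hadj
              · exact hall c hct
        · rintro (hjl | ⟨hjx, hall⟩)
          · rcases List.mem_cons.1 hjl with rfl | hjt
            · exact Or.inl rfl
            · have hji : j ≠ i := fun e => hit (e ▸ hjt)
              refine Or.inr ⟨hcl j (List.mem_cons_of_mem _ hjt) i (List.mem_cons_self) hji, ?_⟩
              rw [ihdes j]
              exact Or.inl hjt
          · refine Or.inr ⟨hall i (List.mem_cons_self), ?_⟩
            rw [ihdes j]
            exact Or.inr ⟨hjx, fun c hc => hall c (List.mem_cons_of_mem _ hc)⟩

lemma clique_mul_des : ∀ (l : List V), l.Nodup →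
    (∀ a ∈ l, ∀ b ∈ l, a ≠ b → Γ.Adj a b) →
    ∀ (x : RACG Γ), (∀ a ∈ l, des Γ x a) →
    mlen (RACG.gen Γ) x = mlen (RACG.gen Γ) (prodW Γ l * x) + l.length ∧
    ∀ j, (∀ c ∈ l, j = c ∨ Γ.Adj j c) →
      (des Γ (prodW Γ l * x) j ↔ des Γ x j ∧ j ∉ l) := by
  intro l
  induction l with
  | nil =>
      intro _ _ x _
      simp
  | cons i t ih =>
      intro hnd hcl x hd
      have hit : i ∉ t := (List.nodup_cons.1 hnd).1
      obtain ⟨ihlen, ihdes⟩ := ih (List.nodup_cons.1 hnd).2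
        (fun a ha b hb hab => hcl a (List.mem_cons_of_mem _ ha) b (List.mem_cons_of_mem _ hb) hab)
        x (fun a ha => hd a (List.mem_cons_of_mem _ ha))
      set y := prodW Γ t * x with hy
      have hiy : des Γ y i := by
        rw [ihdes i (fun c hc => Or.inr (hcl i (List.mem_cons_self) c
          (List.mem_cons_of_mem _ hc) (fun e => hit (e ▸ hc))))]
        exact ⟨hd i (List.mem_cons_self), hit⟩
      have heq : prodW Γ (i :: t) * x = RACG.gen Γ i * y := by
        rw [prodW_cons, mul_assoc]
      constructor
      · rw [heq]
        have := mlen_mul_of_des hiy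
        rw [ihlen, List.length_cons]
        omega
      · intro j hcond
        rw [heq]
        rcases hcond i (List.mem_cons_self) with rfl | hadj
        · constructor
          · intro h
            exact absurd h (des_mul_self hiy)
          · rintro ⟨_, h⟩
            exact absurd (List.mem_cons_self) h
        · rw [des_mul_of_des hiy hadj]
          rw [ihdes j (fun c hc => hcond c (List.mem_cons_of_mem _ hc))]
          have hji : j ≠ i := hadj.ne
          constructor
          · rintro ⟨h1, h2⟩
            exact ⟨h1, by simp [List.mem_cons, hji, h2]⟩
          · rintro ⟨h1, h2⟩
            exact ⟨h1, fun hc => h2 (List.mem_cons_of_mem _ hc)⟩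

/-! ### Counting -/

section Counting

variable (Γ) [Fintype V]

lemma finite_words (n : ℕ) : {w : List V | w.length = n}.Finite := by
  apply Set.Finite.subset (Set.finite_range (List.ofFn : (Fin n → V) → List V))
  rintro w (hw : w.length = n)
  subst hw
  exact ⟨w.get, List.ofFn_get w⟩

lemma finite_mlen (n : ℕ) : {x : RACG Γ | mlen (RACG.gen Γ) x = n}.Finite := by
  apply Set.Finite.subset ((finite_words n (V := V)).image (prodW Γ))
  rintro x (hx : _ = n)
  have hne : {m | ∃ w : List V, (w.map (RACG.gen Γ)).prod = x ∧ w.length = m}.Nonempty := by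
    obtain ⟨w, hw⟩ := exists_prodW x
    exact ⟨w.length, w, hw, rfl⟩
  have hmem := Nat.sInf_mem hne
  rw [show sInf {m | ∃ w : List V, (w.map (RACG.gen Γ)).prod = x ∧ w.length = m}
    = mlen (RACG.gen Γ) x from rfl, hx] at hmem
  obtain ⟨w, hw1, hw2⟩ := hmem
  exact ⟨w, hw2, hw1⟩

def As (n : ℕ) (C : Finset V) : Set (RACG Γ) :=
  {x | mlen (RACG.gen Γ) x = n ∧ ∀ i ∈ C, des Γ x i}

def Bs (n : ℕ) (C : Finset V) : Set (RACG Γ) :=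
  {x | mlen (RACG.gen Γ) x = n ∧ ∀ i ∈ C, ¬ des Γ x i}

lemma card_As_eq {C : Finset V} (hcl : Γ.IsClique (C : Set V)) (n : ℕ) :
    Nat.card (As Γ (n + C.card) C) = Nat.card (Bs Γ n C) := by
  classical
  set l := C.toList with hl
  have hnd : l.Nodup := C.nodup_toList
  have hmem : ∀ a, a ∈ l ↔ a ∈ C := fun a => Finset.mem_toList
  have hpair : ∀ a ∈ l, ∀ b ∈ l, a ≠ b → Γ.Adj a b := fun a ha b hb hab =>
    hcl ((hmem a).1 ha) ((hmem b).1 hb) hab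
  have hlen : l.length = C.card := Finset.length_toList C
  have hsq : prodW Γ l * prodW Γ l = 1 := prodW_mul_self hnd hpair
  refine Nat.card_congr ?_
  refine
    { toFun := fun x => ⟨prodW Γ l * x.1, ?_⟩
      invFun := fun y => ⟨prodW Γ l * y.1, ?_⟩
      left_inv := fun x => Subtype.ext ?_
      right_inv := fun y => Subtype.ext ?_ }
  · obtain ⟨hx1, hx2⟩ := x.2
    obtain ⟨ihlen, ihdes⟩ := clique_mul_des l hnd hpair x.1
      (fun a ha => hx2 a ((hmem a).1 ha))
    constructor
    · rw [hlen] at ihlen; omega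
    · intro i hi
      have hi' : i ∈ l := (hmem i).2 hi
      have hcond : ∀ c ∈ l, i = c ∨ Γ.Adj i c := by
        intro c hc
        by_cases hic : i = c
        · exact Or.inl hic
        · exact Or.inr (hpair i hi' c hc hic)
      rw [ihdes i hcond]
      rintro ⟨_, h2⟩
      exact h2 hi'
  · obtain ⟨hy1, hy2⟩ := y.2
    obtain ⟨ihlen, ihdes⟩ := clique_mul_not_des l hnd hpair y.1
      (fun a ha => hy2 a ((hmem a).1 ha))
    constructor
    · rw [hlen] at ihlen; omega
    · intro i hi
      rw [ihdes i]
      exact Or.inl ((hmem i).2 hi)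
  · show prodW Γ l * (prodW Γ l * x.1) = x.1
    rw [← mul_assoc, hsq, one_mul]
  · show prodW Γ l * (prodW Γ l * y.1) = y.1
    rw [← mul_assoc, hsq, one_mul]

lemma As_eq_empty_of_not_clique {C : Finset V} (h : ¬ Γ.IsClique (C : Set V)) (n : ℕ) :
    As Γ n C = ∅ := by
  rw [Set.eq_empty_iff_forall_notMem]
  rintro x ⟨_, hx⟩
  apply h
  intro a ha b hb hab
  rcases des_adj (hx a ha) (hx b hb) with h' | h'
  · exact absurd h' hab
  · exact h'

lemma card_Bs_univ (n : ℕ) :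
    (Nat.card (Bs Γ n (Finset.univ : Finset V)) : ℚ) = if n = 0 then 1 else 0 := by
  by_cases hn : n = 0
  · subst hn
    have : Bs Γ 0 (Finset.univ : Finset V) = {(1 : RACG Γ)} := by
      ext x
      constructor
      · rintro ⟨h1, h2⟩
        exact eq_one_of_mlen_zero h1
      · rintro rfl
        exact ⟨mlen_one, fun i _ => des_one i⟩
    rw [this]
    simp [Nat.card_coe_set_eq]
  · have : Bs Γ n (Finset.univ : Finset V) = ∅ := by
      rw [Set.eq_empty_iff_forall_notMem]
      rintro x ⟨h1, h2⟩
      have hx1 : x = 1 := eq_one_of_not_des (fun i => h2 i (Finset.mem_univ i))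
      rw [hx1, mlen_one] at h1
      exact hn h1.symm
    rw [this]
    simp [Nat.card_coe_set_eq, hn]

lemma card_filter_eq (n : ℕ) (p : RACG Γ → Prop) [DecidablePred p] :
    (Nat.card {x : RACG Γ | mlen (RACG.gen Γ) x = n ∧ p x} : ℚ) =
    ∑ x ∈ (finite_mlen Γ n).toFinset, if p x then (1 : ℚ) else 0 := by
  have hset : {x : RACG Γ | mlen (RACG.gen Γ) x = n ∧ p x} =
      ↑((finite_mlen Γ n).toFinset.filter p) := by
    ext x
    simp [Set.Finite.mem_toFinset]
  rw [Nat.card_coe_set_eq, hset, Set.ncard_coe_finset, Finset.sum_boole]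

lemma sum_powerset_pow {α : Type*} [CommRing α] (r : α) (s : Finset V) :
    ∑ t ∈ s.powerset, r ^ t.card = (1 + r) ^ s.card := by
  classical
  have := Finset.prod_add (fun _ : V => r) (fun _ : V => (1 : α)) s
  simp only [Finset.prod_const, Finset.prod_const_one, mul_one, one_pow] at this
  rw [add_comm r 1] at this
  rw [← this]

lemma incl_excl (n : ℕ) (C : Finset V) :
    (Nat.card (Bs Γ n C) : ℚ) =
    ∑ B ∈ C.powerset, (-1 : ℚ) ^ B.card * (Nat.card (As Γ n B) : ℚ) := by
  classical
  have hA : ∀ B : Finset V, (Nat.card (As Γ n B) : ℚ) =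
      ∑ x ∈ (finite_mlen Γ n).toFinset, if (∀ i ∈ B, des Γ x i) then (1 : ℚ) else 0 := by
    intro B
    show (Nat.card {x : RACG Γ | mlen (RACG.gen Γ) x = n ∧ ∀ i ∈ B, des Γ x i} : ℚ) = _
    rw [card_filter_eq Γ n (fun x => ∀ i ∈ B, des Γ x i)]
  have hstep : (∑ B ∈ C.powerset, (-1 : ℚ) ^ B.card * (Nat.card (As Γ n B) : ℚ)) =
      ∑ x ∈ (finite_mlen Γ n).toFinset, ∑ B ∈ C.powerset,
        (-1 : ℚ) ^ B.card * (if (∀ i ∈ B, des Γ x i) then (1 : ℚ) else 0) := by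
    rw [Finset.sum_comm]
    apply Finset.sum_congr rfl
    intro B _
    rw [hA B, Finset.mul_sum]
  show (Nat.card {x : RACG Γ | mlen (RACG.gen Γ) x = n ∧ ∀ i ∈ C, ¬ des Γ x i} : ℚ) = _
  rw [card_filter_eq Γ n (fun x => ∀ i ∈ C, ¬ des Γ x i), hstep]
  apply Finset.sum_congr rfl
  intro x _
  set D : Finset V := C.filter (fun i => des Γ x i) with hD
  have hDC : D ⊆ C := Finset.filter_subset _ _
  have hpow : D.powerset ⊆ C.powerset := Finset.powerset_mono.2 hDC
  have step1 : ∀ B ∈ C.powerset,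
      (-1 : ℚ) ^ B.card * (if (∀ i ∈ B, des Γ x i) then (1 : ℚ) else 0) =
      if B ∈ D.powerset then (-1 : ℚ) ^ B.card else 0 := by
    intro B hBC
    rw [Finset.mem_powerset] at hBC
    by_cases hBdes : ∀ i ∈ B, des Γ x i
    · rw [if_pos hBdes, mul_one, if_pos]
      rw [Finset.mem_powerset]
      intro i hi
      rw [hD, Finset.mem_filter]
      exact ⟨hBC hi, hBdes i hi⟩
    · rw [if_neg hBdes, mul_zero, if_neg]
      rw [Finset.mem_powerset]
      intro hsub
      apply hBdes
      intro i hi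
      have hmemD := hsub hi
      rw [hD, Finset.mem_filter] at hmemD
      exact hmemD.2
  rw [Finset.sum_congr rfl step1]
  have step2 : ∑ B ∈ C.powerset, (if B ∈ D.powerset then (-1 : ℚ) ^ B.card else 0) =
      ∑ B ∈ D.powerset, (-1 : ℚ) ^ B.card := by
    rw [← Finset.sum_subset hpow (fun B _ hB => if_neg hB)]
    exact Finset.sum_congr rfl (fun B hB => if_pos hB)
  rw [step2, sum_powerset_pow]
  norm_num
  rw [zero_pow_eq]
  have hiff : D.card = 0 ↔ (∀ i ∈ C, ¬ des Γ x i) := by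
    rw [Finset.card_eq_zero, hD, Finset.filter_eq_empty_iff]
  by_cases hd : ∀ i ∈ C, ¬ des Γ x i
  · rw [if_pos (hiff.2 hd), if_pos hd]
  · rw [if_neg (fun h => hd (hiff.1 h)), if_neg hd]

end Counting

/-! ### Power series -/

section Series

open PowerSeries

variable (Γ) [Fintype V]

noncomputable def Ws : PowerSeries ℚ :=
  PowerSeries.mk fun n => (Nat.card {x : RACG Γ // mlen (RACG.gen Γ) x = n} : ℚ)

noncomputable def gS (C : Finset V) : PowerSeries ℚ :=
  PowerSeries.mk fun n => (Nat.card (As Γ n C) : ℚ)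

noncomputable def hS (C : Finset V) : PowerSeries ℚ :=
  PowerSeries.mk fun n => (Nat.card (Bs Γ n C) : ℚ)

lemma gS_empty : gS Γ ∅ = Ws Γ := by
  ext n
  simp only [gS, Ws, coeff_mk]
  congr 1
  refine Nat.card_congr (Equiv.subtypeEquivRight (fun x => ?_))
  constructor
  · rintro ⟨h, _⟩; exact h
  · intro h; exact ⟨h, fun i hi => absurd hi (by simp)⟩

lemma gS_eq_X_pow_mul {C : Finset V} (hcl : Γ.IsClique (C : Set V)) :
    gS Γ C = (PowerSeries.X : PowerSeries ℚ) ^ C.card * hS Γ C := by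
  ext n
  rw [gS, coeff_mk, PowerSeries.coeff_X_pow_mul' (hS Γ C) C.card n]
  by_cases h : C.card ≤ n
  · rw [if_pos h]
    have h2 := card_As_eq Γ hcl (n - C.card)
    rw [show n - C.card + C.card = n from by omega] at h2
    rw [hS, coeff_mk]
    exact_mod_cast congrArg (Nat.cast (R := ℚ)) h2
  · rw [if_neg h]
    have hempty : As Γ n C = ∅ := by
      rw [Set.eq_empty_iff_forall_notMem]
      rintro x ⟨hx1, hx2⟩
      have hnd : C.toList.Nodup := C.nodup_toList
      have hmem : ∀ a, a ∈ C.toList ↔ a ∈ C := fun a => Finset.mem_toList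
      have hpair : ∀ a ∈ C.toList, ∀ b ∈ C.toList, a ≠ b → Γ.Adj a b := fun a ha b hb hab =>
        hcl ((hmem a).1 ha) ((hmem b).1 hb) hab
      obtain ⟨ihlen, _⟩ := clique_mul_des C.toList hnd hpair x
        (fun a ha => hx2 a ((hmem a).1 ha))
      rw [Finset.length_toList] at ihlen
      omega
    rw [hempty]
    simp [Nat.card_coe_set_eq]

lemma hS_eq (C : Finset V) :
    hS Γ C = ∑ B ∈ C.powerset, PowerSeries.C ((-1) ^ B.card) * gS Γ B := by
  ext n
  rw [hS, coeff_mk]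
  rw [show ((PowerSeries.coeff n) (∑ B ∈ C.powerset, PowerSeries.C ((-1) ^ B.card) * gS Γ B))
    = ∑ B ∈ C.powerset, (PowerSeries.coeff n) (PowerSeries.C ((-1) ^ B.card) * gS Γ B)
    from map_sum _ _ _]
  rw [incl_excl Γ n C]
  apply Finset.sum_congr rfl
  intro B _
  rw [PowerSeries.coeff_C_mul, gS, coeff_mk]

lemma one_sub_u : (1 : PowerSeries ℚ) - PowerSeries.X * (1 + PowerSeries.X : PowerSeries ℚ)⁻¹
    = (1 + PowerSeries.X : PowerSeries ℚ)⁻¹ := by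
  have hc : constantCoeff (1 + PowerSeries.X : PowerSeries ℚ) ≠ 0 := by
    simp
  have hunit : (1 + PowerSeries.X : PowerSeries ℚ) * (1 + PowerSeries.X : PowerSeries ℚ)⁻¹ = 1 :=
    PowerSeries.mul_inv_cancel _ hc
  calc (1 : PowerSeries ℚ) - PowerSeries.X * (1 + PowerSeries.X : PowerSeries ℚ)⁻¹
      = (1 + PowerSeries.X) * (1 + PowerSeries.X : PowerSeries ℚ)⁻¹
        - PowerSeries.X * (1 + PowerSeries.X : PowerSeries ℚ)⁻¹ := by rw [hunit]
    _ = (1 + PowerSeries.X : PowerSeries ℚ)⁻¹ := by ring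

lemma gS_clique : ∀ (k : ℕ) (C : Finset V), C.card = k → Γ.IsClique (C : Set V) →
    gS Γ C = (PowerSeries.X * (1 + PowerSeries.X : PowerSeries ℚ)⁻¹) ^ C.card * Ws Γ := by
  intro k
  induction k using Nat.strong_induction_on with
  | _ k ih =>
    intro C hk hcl
    rcases Nat.eq_zero_or_pos k with rfl | hkpos
    · have hC : C = ∅ := Finset.card_eq_zero.1 hk
      subst hC
      simp [gS_empty]
    · have hkpos' : 0 < C.card := hk ▸ hkpos
      have hCpow : C ∈ C.powerset := Finset.mem_powerset_self C
      have hsplit : ∑ B ∈ C.powerset, PowerSeries.C ((-1) ^ B.card) * gS Γ B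
          = (∑ B ∈ C.powerset.erase C, PowerSeries.C ((-1) ^ B.card) * gS Γ B)
            + PowerSeries.C ((-1) ^ C.card) * gS Γ C :=
        (Finset.sum_erase_add _ _ hCpow).symm
      have hsub : ∀ B ∈ C.powerset.erase C,
          PowerSeries.C ((-1) ^ B.card) * gS Γ B
          = (-(PowerSeries.X * (1 + PowerSeries.X : PowerSeries ℚ)⁻¹)) ^ B.card * Ws Γ := by
        intro B hB
        obtain ⟨hne, hBC⟩ := Finset.mem_erase.1 hB
        rw [Finset.mem_powerset] at hBC
        have hlt : B.card < k := by
          rw [← hk]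
          exact Finset.card_lt_card (Finset.ssubset_iff_subset_ne.2 ⟨hBC, hne⟩)
        have hclB : Γ.IsClique (B : Set V) := hcl.subset (Finset.coe_subset.2 hBC)
        rw [ih B.card hlt B rfl hclB, ← mul_assoc]
        congr 1
        have hnp : (-(PowerSeries.X * (1 + PowerSeries.X : PowerSeries ℚ)⁻¹)) ^ B.card
            = (-1 : PowerSeries ℚ) ^ B.card
              * (PowerSeries.X * (1 + PowerSeries.X : PowerSeries ℚ)⁻¹) ^ B.card := neg_pow _ _
        rw [hnp, map_pow, map_neg, map_one]
      have hsum2 : ∑ B ∈ C.powerset.erase C,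
          ((-(PowerSeries.X * (1 + PowerSeries.X : PowerSeries ℚ)⁻¹)) ^ B.card * Ws Γ)
          = (((1 + PowerSeries.X : PowerSeries ℚ)⁻¹) ^ C.card
              - (-(PowerSeries.X * (1 + PowerSeries.X : PowerSeries ℚ)⁻¹)) ^ C.card) * Ws Γ := by
        rw [← Finset.sum_mul]
        congr 1
        have h4 := sum_powerset_pow (-(PowerSeries.X * (1 + PowerSeries.X : PowerSeries ℚ)⁻¹)) C
        have h3 : (∑ B ∈ C.powerset.erase C,
            (-(PowerSeries.X * (1 + PowerSeries.X : PowerSeries ℚ)⁻¹)) ^ B.card)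
            + (-(PowerSeries.X * (1 + PowerSeries.X : PowerSeries ℚ)⁻¹)) ^ C.card
            = (1 + -(PowerSeries.X * (1 + PowerSeries.X : PowerSeries ℚ)⁻¹)) ^ C.card := by
          rw [Finset.sum_erase_add _ _ hCpow, h4]
        have h5 : (1 : PowerSeries ℚ) + -(PowerSeries.X * (1 + PowerSeries.X : PowerSeries ℚ)⁻¹)
            = (1 + PowerSeries.X : PowerSeries ℚ)⁻¹ := by
          rw [← sub_eq_add_neg, one_sub_u]
        rw [h5] at h3
        exact eq_sub_of_add_eq h3
      have hmain : gS Γ C = PowerSeries.X ^ C.card *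
          (((((1 + PowerSeries.X : PowerSeries ℚ)⁻¹) ^ C.card
              - (-(PowerSeries.X * (1 + PowerSeries.X : PowerSeries ℚ)⁻¹)) ^ C.card) * Ws Γ)
            + (-1 : PowerSeries ℚ) ^ C.card * gS Γ C) := by
        conv_lhs => rw [gS_eq_X_pow_mul Γ hcl]
        congr 1
        rw [hS_eq Γ C, hsplit, Finset.sum_congr rfl hsub, hsum2]
        congr 1
        rw [map_pow, map_neg, map_one]
      have hpows1 : (-(PowerSeries.X * (1 + PowerSeries.X : PowerSeries ℚ)⁻¹)) ^ C.card
          = (-1 : PowerSeries ℚ) ^ C.card * (PowerSeries.X ^ C.card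
            * ((1 + PowerSeries.X : PowerSeries ℚ)⁻¹) ^ C.card) := by
        rw [neg_pow, mul_pow]
      have hpows2 : (PowerSeries.X * (1 + PowerSeries.X : PowerSeries ℚ)⁻¹) ^ C.card
          = PowerSeries.X ^ C.card * ((1 + PowerSeries.X : PowerSeries ℚ)⁻¹) ^ C.card :=
        mul_pow _ _ _
      have hpows3 : (-PowerSeries.X : PowerSeries ℚ) ^ C.card
          = (-1 : PowerSeries ℚ) ^ C.card * PowerSeries.X ^ C.card := neg_pow _ _
      have hcancel : (1 - (-PowerSeries.X : PowerSeries ℚ) ^ C.card) * gS Γ C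
          = (1 - (-PowerSeries.X : PowerSeries ℚ) ^ C.card) *
            ((PowerSeries.X * (1 + PowerSeries.X : PowerSeries ℚ)⁻¹) ^ C.card * Ws Γ) := by
        rw [hpows1] at hmain
        rw [hpows2, hpows3]
        linear_combination hmain
      have hne : (1 - (-PowerSeries.X : PowerSeries ℚ) ^ C.card) ≠ 0 := by
        intro h0
        have hcc : constantCoeff (1 - (-PowerSeries.X : PowerSeries ℚ) ^ C.card) = 1 := by
          rw [map_sub, map_one, map_pow, map_neg, constantCoeff_X, neg_zero,
            zero_pow hkpos'.ne', sub_zero]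
        rw [h0, map_zero] at hcc
        exact one_ne_zero hcc.symm
      exact mul_left_cancel₀ hne hcancel
lemma gS_nonclique {B : Finset V} (h : ¬ Γ.IsClique (B : Set V)) : gS Γ B = 0 := by
  ext n
  rw [gS, coeff_mk, As_eq_empty_of_not_clique Γ h n]
  simp [Nat.card_coe_set_eq]

lemma key_mul : (Polynomial.aeval
    (-(PowerSeries.X * (1 + PowerSeries.X : PowerSeries ℚ)⁻¹)) (cliquePoly Γ)) * Ws Γ = 1 := by
  classical
  have h1 : hS Γ (Finset.univ : Finset V) = 1 := by
    ext n
    rw [hS, coeff_mk, PowerSeries.coeff_one]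
    exact card_Bs_univ Γ n
  have h2 := hS_eq Γ (Finset.univ : Finset V)
  rw [h1] at h2
  have h3 : ∀ B ∈ (Finset.univ : Finset V).powerset,
      PowerSeries.C ((-1) ^ B.card) * gS Γ B =
      if Γ.IsClique (B : Set V) then
        (-(PowerSeries.X * (1 + PowerSeries.X : PowerSeries ℚ)⁻¹)) ^ B.card * Ws Γ else 0 := by
    intro B _
    by_cases hB : Γ.IsClique (B : Set V)
    · rw [if_pos hB, gS_clique Γ B.card B rfl hB, ← mul_assoc]
      congr 1
      have hnp : (-(PowerSeries.X * (1 + PowerSeries.X : PowerSeries ℚ)⁻¹)) ^ B.card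
          = (-1 : PowerSeries ℚ) ^ B.card
            * (PowerSeries.X * (1 + PowerSeries.X : PowerSeries ℚ)⁻¹) ^ B.card := neg_pow _ _
      rw [hnp, map_pow, map_neg, map_one]
    · rw [if_neg hB, gS_nonclique Γ hB, mul_zero]
  rw [Finset.sum_congr rfl h3, Finset.sum_ite, Finset.sum_const_zero, add_zero] at h2
  have hmaps : ∀ B ∈ (Finset.univ : Finset V).powerset.filter
      (fun B : Finset V => Γ.IsClique (B : Set V)),
      B.card ∈ Finset.range (Fintype.card V + 1) := by
    intro B _
    rw [Finset.mem_range]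
    exact Nat.lt_succ_of_le (Finset.card_le_univ B)
  have h4 := Finset.sum_fiberwise_of_maps_to hmaps
      (fun B => (-(PowerSeries.X * (1 + PowerSeries.X : PowerSeries ℚ)⁻¹)) ^ B.card * Ws Γ)
  rw [← h4] at h2
  have h5 : ∀ k ∈ Finset.range (Fintype.card V + 1),
      (∑ B ∈ ((Finset.univ : Finset V).powerset.filter
          (fun B : Finset V => Γ.IsClique (B : Set V))).filter (fun B : Finset V => B.card = k),
        (-(PowerSeries.X * (1 + PowerSeries.X : PowerSeries ℚ)⁻¹)) ^ B.card * Ws Γ)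
      = ((Γ.cliqueFinset k).card : ℚ) •
          ((-(PowerSeries.X * (1 + PowerSeries.X : PowerSeries ℚ)⁻¹)) ^ k * Ws Γ) := by
    intro k _
    have hfib : ((Finset.univ : Finset V).powerset.filter
        (fun B : Finset V => Γ.IsClique (B : Set V))).filter (fun B : Finset V => B.card = k)
        = Γ.cliqueFinset k := by
      ext B
      simp [SimpleGraph.mem_cliqueFinset_iff, SimpleGraph.isNClique_iff, Finset.mem_filter,
        Finset.mem_powerset, Finset.subset_univ]
    rw [hfib]
    have hsummand : ∀ B ∈ Γ.cliqueFinset k,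
        (-(PowerSeries.X * (1 + PowerSeries.X : PowerSeries ℚ)⁻¹)) ^ B.card * Ws Γ
        = (-(PowerSeries.X * (1 + PowerSeries.X : PowerSeries ℚ)⁻¹)) ^ k * Ws Γ := by
      intro B hB
      rw [(SimpleGraph.mem_cliqueFinset_iff.1 hB).card_eq]
    rw [Finset.sum_congr rfl hsummand, Finset.sum_const, ← Nat.cast_smul_eq_nsmul ℚ]
  rw [Finset.sum_congr rfl h5] at h2
  have h6 : Polynomial.aeval (-(PowerSeries.X * (1 + PowerSeries.X : PowerSeries ℚ)⁻¹))
      (cliquePoly Γ)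
      = ∑ k ∈ Finset.range (Fintype.card V + 1),
          ((Γ.cliqueFinset k).card : ℚ) •
            (-(PowerSeries.X * (1 + PowerSeries.X : PowerSeries ℚ)⁻¹)) ^ k := by
    rw [cliquePoly, map_sum]
    apply Finset.sum_congr rfl
    intro k _
    rw [map_smul, map_pow, Polynomial.aeval_X]
  rw [h6, Finset.sum_mul]
  have h7 : ∀ k ∈ Finset.range (Fintype.card V + 1),
      (((Γ.cliqueFinset k).card : ℚ) •
        (-(PowerSeries.X * (1 + PowerSeries.X : PowerSeries ℚ)⁻¹)) ^ k) * Ws Γ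
      = ((Γ.cliqueFinset k).card : ℚ) •
          ((-(PowerSeries.X * (1 + PowerSeries.X : PowerSeries ℚ)⁻¹)) ^ k * Ws Γ) := by
    intro k _
    rw [smul_mul_assoc]
  rw [Finset.sum_congr rfl h7]
  exact h2.symm

end Series

end RacgNF


theorem racg_growth_clique_poly {V : Type*} [Fintype V] (Γ : SimpleGraph V) :
    PowerSeries.mk (fun n => (Nat.card {x : RACG Γ // mlen (RACG.gen Γ) x = n} : ℚ)) =
      (Polynomial.aeval
        (-(PowerSeries.X * (1 + PowerSeries.X : PowerSeries ℚ)⁻¹))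
        (cliquePoly Γ))⁻¹ := by
  classical
  have hkey := RacgNF.key_mul Γ
  have hc : PowerSeries.constantCoeff (Polynomial.aeval
      (-(PowerSeries.X * (1 + PowerSeries.X : PowerSeries ℚ)⁻¹)) (cliquePoly Γ)) ≠ 0 := by
    intro h0
    have hco := congrArg (PowerSeries.constantCoeff) hkey
    rw [map_mul, h0, zero_mul, map_one] at hco
    exact zero_ne_one hco
  have hfin := (PowerSeries.eq_inv_iff_mul_eq_one hc).2 (by rw [mul_comm] at hkey; exact hkey)
  exact hfin
end
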